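/- arXiv:2503.16919 — 7 statements merged into one kernel-verified Lean document; each statement's English description precedes it below -/
import Mathlib

section
/- Let n ≥ 1, let λ > 1 be real, let Σ₁, Σ₂ be n×n symmetric positive definite matrices, and let K be an n×n symmetric positive semidefinite matrix of rank r with 1 ≤ r < n. Let K = P L Pᵀ be an eigendecomposition of K, where P is orthogonal and L = diag(l₁, …, lₙ) with l₁ ≥ l₂ ≥ ⋯ ≥ l_r > l_{r+1} = ⋯ = lₙ = 0. Set L̃ = diag(1/√l₁, …, 1/√l_r, 1, …, 1) and K̃ = L̃ Pᵀ, and for j = 1, 2 set Σ̃ⱼ = K̃ Σⱼ K̃ᵀ, partitioned into blocks Σ̃ⱼ = [[Aⱼ, Bⱼ], [Bⱼᵀ, Cⱼ]] with Aⱼ of size r×r and Cⱼ of size (n−r)×(n−r), and define the Schur complements Σ̂ⱼ = Aⱼ − Bⱼ Cⱼ⁻¹ Bⱼᵀ. Then sup over symmetric K_U with 0 ⪯ K_U ⪯ K of [log det(K_U + Σ₁) − λ log det(K_U + Σ₂)] equals sup over r×r symmetric A_U with 0 ⪯ A_U ⪯ I of [log det(A_U + Σ̂₁) − λ log det(A_U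 + Σ̂₂)] plus the constant log det C₁ − λ log det C₂ − (λ − 1) ∑_{i=1}^{r} log l_i. -/
open Matrix Real
set_option linter.unusedSectionVars false

namespace Prop1Aux

variable {m n : Type*} [Fintype m] [Fintype n] [DecidableEq m] [DecidableEq n]

lemma conjT_eq (A : Matrix m n ℝ) : Aᴴ = Aᵀ := by
  ext i j; simp [Matrix.conjTranspose_apply]

lemma psd_congr {A : Matrix n n ℝ} (hA : A.PosSemidef) (B : Matrix m n ℝ) :
    (B * A * Bᵀ).PosSemidef := by
  simpa [conjT_eq] using hA.mul_mul_conjTranspose_same B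

lemma pd_congr {A : Matrix n n ℝ} (hA : A.PosDef) (B C : Matrix n n ℝ)
    (h : C * Bᵀ = 1) : (B * A * Bᵀ).PosDef := by
  have hAt : Aᵀ = A := by rw [← conjT_eq]; exact hA.isHermitian
  refine Matrix.PosDef.of_dotProduct_mulVec_pos ?_ fun x hx => ?_
  · show (B * A * Bᵀ)ᴴ = B * A * Bᵀ
    rw [conjT_eq, Matrix.transpose_mul, Matrix.transpose_mul, Matrix.transpose_transpose,
      hAt, Matrix.mul_assoc]
  · have hz : Bᵀ *ᵥ x ≠ 0 := by
      intro h0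
      apply hx
      have h1 : C *ᵥ (Bᵀ *ᵥ x) = x := by
        rw [Matrix.mulVec_mulVec, h, Matrix.one_mulVec]
      rw [h0, Matrix.mulVec_zero] at h1
      exact h1.symm
    have h2 := hA.dotProduct_mulVec_pos hz
    have h3 : star x ⬝ᵥ (B * A * Bᵀ) *ᵥ x = star (Bᵀ *ᵥ x) ⬝ᵥ A *ᵥ (Bᵀ *ᵥ x) := by
      simp only [star_trivial, ← Matrix.mulVec_mulVec]
      rw [Matrix.dotProduct_mulVec x B, ← Matrix.mulVec_transpose]
    rw [h3]; exact h2

lemma blocks22_posDef {M : Matrix (m ⊕ n) (m ⊕ n) ℝ} (hM : M.PosDef) :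
    M.toBlocks₂₂.PosDef := by
  have hsym : Mᵀ = M := by rw [← conjT_eq]; exact hM.isHermitian
  refine Matrix.PosDef.of_dotProduct_mulVec_pos ?_ fun x hx => ?_
  · show M.toBlocks₂₂ᴴ = M.toBlocks₂₂
    rw [conjT_eq]
    ext i j
    exact (congrFun (congrFun hsym (Sum.inr j)) (Sum.inr i)).symm
  · have hv : Sum.elim (0 : m → ℝ) x ≠ 0 := by
      intro h0
      apply hx
      funext j
      exact congrFun h0 (Sum.inr j)
    have h2 := hM.dotProduct_mulVec_pos hv
    have h3 : star (Sum.elim (0 : m → ℝ) x) ⬝ᵥ M *ᵥ Sum.elim (0 : m → ℝ) x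
        = star x ⬝ᵥ M.toBlocks₂₂ *ᵥ x := by
      conv_lhs => rw [← fromBlocks_toBlocks M]
      simp [Matrix.fromBlocks_mulVec, sumElim_dotProduct_sumElim]
    rw [h3] at h2; exact h2

lemma schur_posDef {A : Matrix m m ℝ} {B : Matrix m n ℝ} {D : Matrix n n ℝ}
    (hM : (fromBlocks A B Bᵀ D).PosDef) (hD : D.PosDef) :
    (A - B * D⁻¹ * Bᵀ).PosDef := by
  haveI : Invertible D := D.invertibleOfIsUnitDet hD.det_pos.ne'.isUnit
  have hBt : Bᵀ = Bᴴ := (conjT_eq B).symm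
  have hA : A.IsHermitian := by
    have := hM.isHermitian
    rw [Matrix.isHermitian_fromBlocks_iff] at this
    exact this.1
  refine Matrix.PosDef.of_dotProduct_mulVec_pos ?_ fun x hx => ?_
  · have h1 : ((Bᵀ)ᴴ * D⁻¹ * Bᵀ).IsHermitian :=
      Matrix.isHermitian_conjTranspose_mul_mul Bᵀ hD.isHermitian.inv
    have h2 : (Bᵀ)ᴴ = B := by rw [conjT_eq, Matrix.transpose_transpose]
    rw [h2] at h1
    exact hA.sub h1
  · set y : n → ℝ := -((D⁻¹ * Bᵀ) *ᵥ x) with hy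
    have hv : Sum.elim x y ≠ 0 := by
      intro h0
      apply hx
      funext i
      exact congrFun h0 (Sum.inl i)
    have h2 := hM.dotProduct_mulVec_pos hv
    have key := Matrix.schur_complement_eq₂₂ (α := ℝ) A B x y hD.isHermitian
    rw [hBt] at *
    have hzero : (D⁻¹ * Bᴴ) *ᵥ x + y = 0 := by rw [hy, ← hBt]; abel
    rw [hzero] at key
    simp only [star_zero, Matrix.zero_vecMul, zero_dotProduct, zero_add] at key
    have h4 : star (Sum.elim x y) ⬝ᵥ (fromBlocks A B Bᴴ D) *ᵥ (Sum.elim x y)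
        = star (Sum.elim x y) ᵥ* (fromBlocks A B Bᴴ D) ⬝ᵥ (Sum.elim x y) :=
      Matrix.dotProduct_mulVec _ _ _
    rw [h4, key] at h2
    rwa [show star x ⬝ᵥ (A - B * D⁻¹ * Bᴴ) *ᵥ x
        = star x ᵥ* (A - B * D⁻¹ * Bᴴ) ⬝ᵥ x from Matrix.dotProduct_mulVec _ _ _]

open scoped MatrixOrder in
lemma fromBlocks_psd {A : Matrix m m ℝ} (hA : A.PosSemidef) :
    (fromBlocks A 0 0 (0 : Matrix n n ℝ)).PosSemidef := by
  obtain ⟨B, hB⟩ := CStarAlgebra.nonneg_iff_eq_star_mul_self.mp hA.nonneg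
  rw [Matrix.star_eq_conjTranspose] at hB
  have h : fromBlocks A 0 0 (0 : Matrix n n ℝ) =
      (fromBlocks B 0 0 0)ᴴ * (fromBlocks B 0 0 0) := by
    rw [conjT_eq, Matrix.fromBlocks_transpose, Matrix.fromBlocks_multiply]
    rw [hB, conjT_eq]
    simp
  rw [h]
  exact Matrix.posSemidef_conjTranspose_mul_self _

lemma one_le_det_one_add {C : Matrix n n ℝ} (hC : C.PosSemidef) :
    1 ≤ ((1 : Matrix n n ℝ) + C).det := by
  have hH := hC.isHermitian
  set U : Matrix n n ℝ := (Matrix.IsHermitian.eigenvectorUnitary hH : Matrix n n ℝ) with hU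
  have hUU : U * star U = 1 :=
    Matrix.mem_unitaryGroup_iff.mp (Matrix.IsHermitian.eigenvectorUnitary hH).2
  have h1 : (1 : Matrix n n ℝ) + C
      = U * ((1 : Matrix n n ℝ) + diagonal (RCLike.ofReal ∘ hH.eigenvalues)) * star U := by
    rw [Matrix.mul_add, Matrix.add_mul, Matrix.mul_one, hUU]
    congr 1
    exact hH.spectral_theorem
  have hdiag : ((1 : Matrix n n ℝ) + diagonal (RCLike.ofReal ∘ hH.eigenvalues)).det
      = ∏ i, (1 + hH.eigenvalues i) := by
    rw [← Matrix.diagonal_one, Matrix.diagonal_add, Matrix.det_diagonal]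
    simp [RCLike.ofReal_real_eq_id]
  have hUdet : U.det * (star U).det = 1 := by rw [← Matrix.det_mul, hUU, Matrix.det_one]
  rw [h1, Matrix.det_mul, Matrix.det_mul]
  have : U.det * ((1 : Matrix n n ℝ) + diagonal (RCLike.ofReal ∘ hH.eigenvalues)).det
      * (star U).det = ((1 : Matrix n n ℝ) + diagonal (RCLike.ofReal ∘ hH.eigenvalues)).det
      * (U.det * (star U).det) := by ring
  rw [this, hUdet, mul_one, hdiag]
  calc (1:ℝ) = ∏ _i : n, (1:ℝ) := by simp
    _ ≤ ∏ i, (1 + hH.eigenvalues i) := by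
        refine Finset.prod_le_prod (fun i _ => by norm_num) fun i _ => ?_
        have := hC.eigenvalues_nonneg i
        linarith

open scoped MatrixOrder in
lemma det_mono {A B : Matrix n n ℝ} (hA : A.PosDef) (hB : B.PosSemidef) :
    A.det ≤ (A + B).det := by
  set R := CFC.sqrt A with hRdef
  have hRR : R * R = A := CFC.sqrt_mul_sqrt_self A hA.posSemidef.nonneg
  have hRpsd : R.PosSemidef := (CFC.sqrt_nonneg A).posSemidef
  have hdetA : 0 < A.det := hA.det_pos
  have hRdet2 : R.det * R.det = A.det := by rw [← Matrix.det_mul, hRR]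
  have hRdet : IsUnit R.det := by
    refine isUnit_iff_ne_zero.mpr fun h0 => ?_
    rw [h0, zero_mul] at hRdet2
    exact hdetA.ne hRdet2
  have hRH : Rᵀ = R := by rw [← conjT_eq]; exact hRpsd.isHermitian
  have hinvT : (R⁻¹)ᵀ = R⁻¹ := by rw [Matrix.transpose_nonsing_inv, hRH]
  have hC : (R⁻¹ * B * (R⁻¹)ᵀ).PosSemidef := psd_congr hB R⁻¹
  rw [hinvT] at hC
  have hsum : A + B = R * ((1 : Matrix n n ℝ) + R⁻¹ * B * R⁻¹) * R := by
    rw [Matrix.mul_add, Matrix.add_mul, Matrix.mul_one, hRR]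
    congr 1
    have h1 : R * (R⁻¹ * B * R⁻¹) * R = (R * R⁻¹) * B * (R⁻¹ * R) := by
      simp only [Matrix.mul_assoc]
    rw [h1, Matrix.mul_nonsing_inv _ hRdet, Matrix.nonsing_inv_mul _ hRdet,
      Matrix.one_mul, Matrix.mul_one]
  rw [hsum, Matrix.det_mul, Matrix.det_mul]
  have h2 : R.det * ((1 : Matrix n n ℝ) + R⁻¹ * B * R⁻¹).det * R.det
      = A.det * ((1 : Matrix n n ℝ) + R⁻¹ * B * R⁻¹).det := by
    rw [← hRdet2]; ring
  rw [h2]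
  nlinarith [one_le_det_one_add hC]

end Prop1Aux


open Prop1Aux in
/-- Proposition 1: reduction of the Gaussian vector BC capacity optimization
`max_{0 ⪯ K_U ⪯ K} log|K_U + Σ₁| − λ log|K_U + Σ₂|` to an equivalent problem whose
covariance constraint is the identity matrix.  The index set `Fin r ⊕ Fin s`
(with `n = r + s`, `1 ≤ r`, `1 ≤ s`, so `1 ≤ r < n`) realizes the block partition. -/
theorem stmt0 (r s : ℕ) (hr : 1 ≤ r) (hs : 1 ≤ s)
    (lam : ℝ) (hlam : 1 < lam)
    (S1 S2 K : Matrix (Fin r ⊕ Fin s) (Fin r ⊕ Fin s) ℝ)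
    (hS1 : S1.PosDef) (hS2 : S2.PosDef) (hK : K.PosSemidef)
    (hrank : K.rank = r)
    (P : Matrix (Fin r ⊕ Fin s) (Fin r ⊕ Fin s) ℝ)
    (hP : P * Pᵀ = 1) (hP' : Pᵀ * P = 1)
    (l : Fin r ⊕ Fin s → ℝ)
    (hlpos : ∀ i : Fin r, 0 < l (Sum.inl i))
    (hlmono : ∀ i j : Fin r, i ≤ j → l (Sum.inl j) ≤ l (Sum.inl i))
    (hlzero : ∀ j : Fin s, l (Sum.inr j) = 0)
    (hKdecomp : K = P * Matrix.diagonal l * Pᵀ)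
    (Ltil : Matrix (Fin r ⊕ Fin s) (Fin r ⊕ Fin s) ℝ)
    (hLtil : Ltil = Matrix.diagonal
      (Sum.elim (fun i : Fin r => 1 / Real.sqrt (l (Sum.inl i))) (fun _ : Fin s => (1 : ℝ))))
    (Ktil : Matrix (Fin r ⊕ Fin s) (Fin r ⊕ Fin s) ℝ)
    (hKtil : Ktil = Ltil * Pᵀ)
    (St1 St2 : Matrix (Fin r ⊕ Fin s) (Fin r ⊕ Fin s) ℝ)
    (hSt1 : St1 = Ktil * S1 * Ktilᵀ) (hSt2 : St2 = Ktil * S2 * Ktilᵀ)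
    (Sh1 Sh2 : Matrix (Fin r) (Fin r) ℝ)
    (hSh1 : Sh1 = St1.toBlocks₁₁ - St1.toBlocks₁₂ * (St1.toBlocks₂₂)⁻¹ * (St1.toBlocks₁₂)ᵀ)
    (hSh2 : Sh2 = St2.toBlocks₁₁ - St2.toBlocks₁₂ * (St2.toBlocks₂₂)⁻¹ * (St2.toBlocks₁₂)ᵀ) :
    sSup {y : ℝ | ∃ KU : Matrix (Fin r ⊕ Fin s) (Fin r ⊕ Fin s) ℝ,
        KU.PosSemidef ∧ (K - KU).PosSemidef ∧
        y = Real.log (KU + S1).det - lam * Real.log (KU + S2).det}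
      = sSup {y : ℝ | ∃ AU : Matrix (Fin r) (Fin r) ℝ,
          AU.PosSemidef ∧ ((1 : Matrix (Fin r) (Fin r) ℝ) - AU).PosSemidef ∧
          y = Real.log (AU + Sh1).det - lam * Real.log (AU + Sh2).det}
        + (Real.log (St1.toBlocks₂₂).det - lam * Real.log (St2.toBlocks₂₂).det
            - (lam - 1) * ∑ i : Fin r, Real.log (l (Sum.inl i))) := by
  classical
  have hlam0 : (0:ℝ) < lam := lt_trans one_pos hlam
  set c : ℝ := Real.log (St1.toBlocks₂₂).det - lam * Real.log (St2.toBlocks₂₂).det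
      - (lam - 1) * ∑ i : Fin r, Real.log (l (Sum.inl i)) with hc
  set d : Fin r ⊕ Fin s → ℝ :=
    Sum.elim (fun i : Fin r => Real.sqrt (l (Sum.inl i))) (fun _ : Fin s => (1:ℝ)) with hd
  set Q : Matrix (Fin r ⊕ Fin s) (Fin r ⊕ Fin s) ℝ := P * Matrix.diagonal d with hQ
  have hsq : ∀ i : Fin r, Real.sqrt (l (Sum.inl i)) ≠ 0 :=
    fun i => (Real.sqrt_pos.mpr (hlpos i)).ne'
  have hLd : Ltil * Matrix.diagonal d = 1 := by
    rw [hLtil, Matrix.diagonal_mul_diagonal]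
    have hfun : (fun k => (Sum.elim (fun i : Fin r => 1 / Real.sqrt (l (Sum.inl i)))
        (fun _ : Fin s => (1:ℝ))) k * d k) = fun _ : Fin r ⊕ Fin s => (1:ℝ) := by
      funext k
      rcases k with i | j
      · simp [hd, one_div, inv_mul_cancel₀ (hsq i)]
      · simp [hd]
    rw [hfun, Matrix.diagonal_one]
  have hdL : Matrix.diagonal d * Ltil = 1 := by
    rw [hLtil, Matrix.diagonal_mul_diagonal]
    have hfun : (fun k => d k * (Sum.elim (fun i : Fin r => 1 / Real.sqrt (l (Sum.inl i)))
        (fun _ : Fin s => (1:ℝ))) k) = fun _ : Fin r ⊕ Fin s => (1:ℝ) := by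
      funext k
      rcases k with i | j
      · simp [hd, one_div, mul_inv_cancel₀ (hsq i)]
      · simp [hd]
    rw [hfun, Matrix.diagonal_one]
  have hKtilQ : Ktil * Q = 1 := by
    rw [hKtil, hQ, show Ltil * Pᵀ * (P * Matrix.diagonal d)
        = Ltil * ((Pᵀ * P) * Matrix.diagonal d) by simp only [Matrix.mul_assoc],
      hP', Matrix.one_mul, hLd]
  have hQKtil : Q * Ktil = 1 := by
    rw [hKtil, hQ, show P * Matrix.diagonal d * (Ltil * Pᵀ)
        = P * ((Matrix.diagonal d * Ltil) * Pᵀ) by simp only [Matrix.mul_assoc],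
      hdL, Matrix.one_mul, hP]
  have hKtilTQT : Ktilᵀ * Qᵀ = 1 := by
    rw [← Matrix.transpose_mul, hQKtil, Matrix.transpose_one]
  have hQTKtilT : Qᵀ * Ktilᵀ = 1 := by
    rw [← Matrix.transpose_mul, hKtilQ, Matrix.transpose_one]
  set E : Matrix (Fin r ⊕ Fin s) (Fin r ⊕ Fin s) ℝ :=
    Matrix.fromBlocks (1 : Matrix (Fin r) (Fin r) ℝ) 0 0 (0 : Matrix (Fin s) (Fin s) ℝ)
    with hEdef
  have hKtilT : Ktilᵀ = P * Ltil := by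
    rw [hKtil, Matrix.transpose_mul, Matrix.transpose_transpose, hLtil,
      Matrix.diagonal_transpose, ← hLtil]
  have hE : Ktil * K * Ktilᵀ = E := by
    calc Ktil * K * Ktilᵀ
        = Ltil * (Pᵀ * P) * Matrix.diagonal l * (Pᵀ * P) * Ltil := by
          rw [hKtilT, hKtil, hKdecomp]; simp only [Matrix.mul_assoc]
      _ = Ltil * Matrix.diagonal l * Ltil := by
          rw [hP']; simp only [Matrix.mul_one]
      _ = E := by
          rw [hLtil, Matrix.diagonal_mul_diagonal, Matrix.diagonal_mul_diagonal, hEdef]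
          have hfun : (fun k => (Sum.elim (fun i : Fin r => 1 / Real.sqrt (l (Sum.inl i)))
                (fun _ : Fin s => (1:ℝ))) k * l k
              * (Sum.elim (fun i : Fin r => 1 / Real.sqrt (l (Sum.inl i)))
                (fun _ : Fin s => (1:ℝ))) k)
              = Sum.elim (fun _ : Fin r => (1:ℝ)) (fun _ : Fin s => (0:ℝ)) := by
            funext k
            rcases k with i | j
            · have hss : Real.sqrt (l (Sum.inl i)) * Real.sqrt (l (Sum.inl i)) = l (Sum.inl i) :=
                Real.mul_self_sqrt (hlpos i).le
              simp only [Sum.elim_inl]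
              rw [div_mul_eq_mul_div, one_mul, div_mul_div_comm, mul_one, hss,
                div_self (hlpos i).ne']
            · simp [hlzero j]
          rw [hfun]
          rw [show Matrix.fromBlocks (1 : Matrix (Fin r) (Fin r) ℝ) 0 0
              (0 : Matrix (Fin s) (Fin s) ℝ)
              = Matrix.fromBlocks (Matrix.diagonal fun _ : Fin r => (1:ℝ)) 0 0
                (Matrix.diagonal fun _ : Fin s => (0:ℝ)) by
            rw [Matrix.diagonal_one, Matrix.diagonal_zero],
            Matrix.fromBlocks_diagonal]
  set Lprod : ℝ := ∏ i : Fin r, l (Sum.inl i) with hLprod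
  have hLprodpos : 0 < Lprod := Finset.prod_pos fun i _ => hlpos i
  have hPdet : P.det * P.det = 1 := by
    have h := congrArg Matrix.det hP
    rwa [Matrix.det_mul, Matrix.det_transpose, Matrix.det_one] at h
  have hQdet2 : Q.det * Q.det = Lprod := by
    rw [hQ, Matrix.det_mul, Matrix.det_diagonal]
    have hprod : (∏ k, d k) * (∏ k, d k) = Lprod := by
      rw [← Finset.prod_mul_distrib, hLprod]
      rw [Fintype.prod_sum_type (fun k => d k * d k)]
      have h1 : ∀ i : Fin r, d (Sum.inl i) * d (Sum.inl i) = l (Sum.inl i) := fun i => by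
        simp [hd, Real.mul_self_sqrt (hlpos i).le]
      have h2 : ∀ j : Fin s, d (Sum.inr j) * d (Sum.inr j) = 1 := fun j => by simp [hd]
      simp only [h1, h2, Finset.prod_const_one, mul_one]
    calc P.det * (∏ k, d k) * (P.det * (∏ k, d k))
        = (P.det * P.det) * ((∏ k, d k) * (∏ k, d k)) := by ring
      _ = Lprod := by rw [hPdet, hprod, one_mul]
  have hconj : ∀ M : Matrix (Fin r ⊕ Fin s) (Fin r ⊕ Fin s) ℝ,
      Q * (Ktil * M * Ktilᵀ) * Qᵀ = M := by
    intro M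
    rw [show Q * (Ktil * M * Ktilᵀ) * Qᵀ = (Q * Ktil) * M * (Ktilᵀ * Qᵀ) by
      simp only [Matrix.mul_assoc], hQKtil, hKtilTQT, Matrix.one_mul, Matrix.mul_one]
  have hKQE : K = Q * E * Qᵀ := by rw [← hE]; exact (hconj K).symm
  -- positive definiteness facts
  have hStPD : ∀ Sg : Matrix (Fin r ⊕ Fin s) (Fin r ⊕ Fin s) ℝ, Sg.PosDef →
      (Ktil * Sg * Ktilᵀ).PosDef := fun Sg h => pd_congr h Ktil Qᵀ hQTKtilT
  have hSt1PD : St1.PosDef := by rw [hSt1]; exact hStPD S1 hS1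
  have hSt2PD : St2.PosDef := by rw [hSt2]; exact hStPD S2 hS2
  have hC1PD : St1.toBlocks₂₂.PosDef := blocks22_posDef hSt1PD
  have hC2PD : St2.toBlocks₂₂.PosDef := blocks22_posDef hSt2PD
  have hblk : ∀ St : Matrix (Fin r ⊕ Fin s) (Fin r ⊕ Fin s) ℝ, St.PosDef →
      St = Matrix.fromBlocks St.toBlocks₁₁ St.toBlocks₁₂ (St.toBlocks₁₂)ᵀ St.toBlocks₂₂ := by
    intro St hSt
    have hsym : Stᵀ = St := by rw [← conjT_eq]; exact hSt.isHermitian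
    have h21 : St.toBlocks₂₁ = (St.toBlocks₁₂)ᵀ := by
      ext i j
      exact (congrFun (congrFun hsym (Sum.inr i)) (Sum.inl j)).symm
    conv_lhs => rw [← Matrix.fromBlocks_toBlocks St]
    rw [h21]
  have hSh1PD : Sh1.PosDef := by
    rw [hSh1]; exact schur_posDef (hblk St1 hSt1PD ▸ hSt1PD) hC1PD
  have hSh2PD : Sh2.PosDef := by
    rw [hSh2]; exact schur_posDef (hblk St2 hSt2PD ▸ hSt2PD) hC2PD
  -- the main determinant identity
  have main : ∀ (Sg Stg : Matrix (Fin r ⊕ Fin s) (Fin r ⊕ Fin s) ℝ)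
      (Shg : Matrix (Fin r) (Fin r) ℝ),
      Stg = Ktil * Sg * Ktilᵀ →
      Shg = Stg.toBlocks₁₁ - Stg.toBlocks₁₂ * (Stg.toBlocks₂₂)⁻¹ * (Stg.toBlocks₁₂)ᵀ →
      Sg.PosDef →
      ∀ AU : Matrix (Fin r) (Fin r) ℝ,
        (Q * Matrix.fromBlocks AU 0 0 0 * Qᵀ + Sg).det
          = Lprod * (Stg.toBlocks₂₂.det * (AU + Shg).det) := by
    intro Sg Stg Shg hStg hShg hSg AU
    have hStgPD : Stg.PosDef := by rw [hStg]; exact hStPD Sg hSg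
    have hCg : Stg.toBlocks₂₂.PosDef := blocks22_posDef hStgPD
    have hSgQ : Sg = Q * Stg * Qᵀ := by rw [hStg]; exact (hconj Sg).symm
    haveI : Invertible Stg.toBlocks₂₂ :=
      Stg.toBlocks₂₂.invertibleOfIsUnitDet hCg.det_pos.ne'.isUnit
    have h1 : Q * Matrix.fromBlocks AU 0 0 0 * Qᵀ + Sg
        = Q * (Matrix.fromBlocks AU 0 0 0 + Stg) * Qᵀ := by
      rw [Matrix.mul_add, Matrix.add_mul, ← hSgQ]
    rw [h1, Matrix.det_mul, Matrix.det_mul, Matrix.det_transpose]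
    have h2 : (Matrix.fromBlocks AU 0 0 0 + Stg).det
        = Stg.toBlocks₂₂.det * (AU + Shg).det := by
      conv_lhs => rw [hblk Stg hStgPD]
      rw [Matrix.fromBlocks_add]
      simp only [add_zero, zero_add]
      rw [Matrix.det_fromBlocks₂₂, Matrix.invOf_eq_nonsing_inv]
      congr 1
      rw [hShg, add_sub_assoc]
    rw [h2, ← hQdet2]; ring
  -- the value identity
  have hkey : ∀ AU : Matrix (Fin r) (Fin r) ℝ, AU.PosSemidef →
      Real.log (Q * Matrix.fromBlocks AU 0 0 0 * Qᵀ + S1).det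
        - lam * Real.log (Q * Matrix.fromBlocks AU 0 0 0 * Qᵀ + S2).det
      = (Real.log (AU + Sh1).det - lam * Real.log (AU + Sh2).det) + c := by
    intro AU hAU
    have p1 : (0:ℝ) < (AU + Sh1).det := (Matrix.PosDef.posSemidef_add hAU hSh1PD).det_pos
    have p2 : (0:ℝ) < (AU + Sh2).det := (Matrix.PosDef.posSemidef_add hAU hSh2PD).det_pos
    have c1 : (0:ℝ) < St1.toBlocks₂₂.det := hC1PD.det_pos
    have c2 : (0:ℝ) < St2.toBlocks₂₂.det := hC2PD.det_pos
    rw [main S1 St1 Sh1 hSt1 hSh1 hS1 AU, main S2 St2 Sh2 hSt2 hSh2 hS2 AU]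
    rw [Real.log_mul hLprodpos.ne' (mul_pos c1 p1).ne', Real.log_mul c1.ne' p1.ne',
      Real.log_mul hLprodpos.ne' (mul_pos c2 p2).ne', Real.log_mul c2.ne' p2.ne']
    have hlogL : Real.log Lprod = ∑ i : Fin r, Real.log (l (Sum.inl i)) :=
      Real.log_prod fun i _ => (hlpos i).ne'
    rw [hc, hlogL]
    ring
  -- the set identity
  have hseteq : {y : ℝ | ∃ KU : Matrix (Fin r ⊕ Fin s) (Fin r ⊕ Fin s) ℝ,
        KU.PosSemidef ∧ (K - KU).PosSemidef ∧
        y = Real.log (KU + S1).det - lam * Real.log (KU + S2).det}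
      = (fun z => z + c) '' {y : ℝ | ∃ AU : Matrix (Fin r) (Fin r) ℝ,
          AU.PosSemidef ∧ ((1 : Matrix (Fin r) (Fin r) ℝ) - AU).PosSemidef ∧
          y = Real.log (AU + Sh1).det - lam * Real.log (AU + Sh2).det} := by
    ext y
    constructor
    · rintro ⟨KU, hKU1, hKU2, rfl⟩
      set N : Matrix (Fin r ⊕ Fin s) (Fin r ⊕ Fin s) ℝ := Ktil * KU * Ktilᵀ with hN
      have hNpsd : N.PosSemidef := psd_congr hKU1 Ktil
      have hENeq : Ktil * (K - KU) * Ktilᵀ = E - N := by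
        rw [Matrix.mul_sub, Matrix.sub_mul, hE]
      have hENpsd : (E - N).PosSemidef := hENeq ▸ psd_congr hKU2 Ktil
      have hsymN : Nᵀ = N := by rw [← conjT_eq]; exact hNpsd.isHermitian
      have hcol : ∀ (j : Fin s) (i : Fin r ⊕ Fin s), N i (Sum.inr j) = 0 := by
        intro j
        have hquad : ∀ M : Matrix (Fin r ⊕ Fin s) (Fin r ⊕ Fin s) ℝ,
            star (Pi.single (Sum.inr j) (1:ℝ)) ⬝ᵥ M *ᵥ Pi.single (Sum.inr j) (1:ℝ)
              = M (Sum.inr j) (Sum.inr j) := by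
          intro M
          simp [Matrix.mulVec_single, single_dotProduct]
        have h1 : 0 ≤ N (Sum.inr j) (Sum.inr j) := by
          have := hNpsd.dotProduct_mulVec_nonneg (Pi.single (Sum.inr j) 1); rwa [hquad] at this
        have h2 : 0 ≤ E (Sum.inr j) (Sum.inr j) - N (Sum.inr j) (Sum.inr j) := by
          have := hENpsd.dotProduct_mulVec_nonneg (Pi.single (Sum.inr j) 1)
          rwa [hquad, Matrix.sub_apply] at this
        have hEjj : E (Sum.inr j) (Sum.inr j) = 0 := by
          simp [hEdef]
        have h0 : N (Sum.inr j) (Sum.inr j) = 0 := le_antisymm (by linarith) h1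
        have hz : N *ᵥ Pi.single (Sum.inr j) 1 = 0 := by
          apply (hNpsd.dotProduct_mulVec_zero_iff _).mp
          rw [hquad]; exact h0
        intro i
        have hzi := congrFun hz i
        simpa [Matrix.mulVec_single] using hzi
      have hrow : ∀ (j : Fin s) (i : Fin r ⊕ Fin s), N (Sum.inr j) i = 0 := by
        intro j i
        have h := congrFun (congrFun hsymN (Sum.inr j)) i
        rw [Matrix.transpose_apply] at h
        rw [← h]; exact hcol j i
      have hNblk : N = Matrix.fromBlocks N.toBlocks₁₁ 0 0 0 := by
        ext k q
        rcases k with i | i <;> rcases q with j' | j'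
        · rfl
        · simp only [Matrix.fromBlocks_apply₁₂, Matrix.zero_apply]
          exact hcol j' (Sum.inl i)
        · simp only [Matrix.fromBlocks_apply₂₁, Matrix.zero_apply]
          exact hrow i (Sum.inl j')
        · simp only [Matrix.fromBlocks_apply₂₂, Matrix.zero_apply]
          exact hcol j' (Sum.inr i)
      have hAUpsd : N.toBlocks₁₁.PosSemidef := hNpsd.submatrix Sum.inl
      have h1AU : ((1 : Matrix (Fin r) (Fin r) ℝ) - N.toBlocks₁₁).PosSemidef := by
        have h := hENpsd.submatrix Sum.inl
        have heq : (E - N).submatrix Sum.inl Sum.inl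
            = (1 : Matrix (Fin r) (Fin r) ℝ) - N.toBlocks₁₁ := by
          ext i j
          simp [hEdef, Matrix.submatrix_apply, Matrix.sub_apply, Matrix.one_apply,
            Matrix.toBlocks₁₁]
        rw [heq] at h
        exact h
      have hKUeq : KU = Q * N * Qᵀ := by rw [hN]; exact (hconj KU).symm
      have hKUeq2 : KU = Q * Matrix.fromBlocks N.toBlocks₁₁ 0 0 0 * Qᵀ := by
        rw [← hNblk]; exact hKUeq
      refine ⟨_, ⟨N.toBlocks₁₁, hAUpsd, h1AU, rfl⟩, ?_⟩
      show _ + c = _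
      rw [hKUeq2]
      exact (hkey N.toBlocks₁₁ hAUpsd).symm
    · rintro ⟨z, ⟨AU, hAU, h1AU, rfl⟩, rfl⟩
      refine ⟨Q * Matrix.fromBlocks AU 0 0 0 * Qᵀ,
        psd_congr (fromBlocks_psd hAU) Q, ?_, (hkey AU hAU).symm⟩
      have hEN : E - Matrix.fromBlocks AU 0 0 0
          = Matrix.fromBlocks ((1 : Matrix (Fin r) (Fin r) ℝ) - AU) 0 0 0 := by
        ext k q
        rcases k with i | i <;> rcases q with j | j <;>
          simp [hEdef, Matrix.sub_apply]
      have h2 : K - Q * Matrix.fromBlocks AU 0 0 0 * Qᵀ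
          = Q * (Matrix.fromBlocks ((1 : Matrix (Fin r) (Fin r) ℝ) - AU) 0 0 0) * Qᵀ := by
        rw [← hEN, Matrix.mul_sub, Matrix.sub_mul, ← hKQE]
      rw [h2]
      exact psd_congr (fromBlocks_psd h1AU) Q
  rw [hseteq]
  have hTne : Set.Nonempty {y : ℝ | ∃ AU : Matrix (Fin r) (Fin r) ℝ,
      AU.PosSemidef ∧ ((1 : Matrix (Fin r) (Fin r) ℝ) - AU).PosSemidef ∧
      y = Real.log (AU + Sh1).det - lam * Real.log (AU + Sh2).det} :=
    ⟨_, ⟨0, Matrix.PosSemidef.zero, by rw [sub_zero]; exact Matrix.PosSemidef.one, rfl⟩⟩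
  have hTbdd : BddAbove {y : ℝ | ∃ AU : Matrix (Fin r) (Fin r) ℝ,
      AU.PosSemidef ∧ ((1 : Matrix (Fin r) (Fin r) ℝ) - AU).PosSemidef ∧
      y = Real.log (AU + Sh1).det - lam * Real.log (AU + Sh2).det} := by
    refine ⟨Real.log (((1 : Matrix (Fin r) (Fin r) ℝ) + Sh1).det)
      - lam * Real.log Sh2.det, ?_⟩
    rintro y ⟨AU, h0, h1, rfl⟩
    have hApd : (AU + Sh1).PosDef := Matrix.PosDef.posSemidef_add h0 hSh1PD
    have hd1 : (AU + Sh1).det ≤ ((1 : Matrix (Fin r) (Fin r) ℝ) + Sh1).det := by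
      have h := det_mono hApd h1
      have heq : AU + Sh1 + ((1 : Matrix (Fin r) (Fin r) ℝ) - AU)
          = (1 : Matrix (Fin r) (Fin r) ℝ) + Sh1 := by abel
      rwa [heq] at h
    have hl1 := Real.log_le_log hApd.det_pos hd1
    have hd2 : Sh2.det ≤ (AU + Sh2).det := by
      have h := det_mono hSh2PD h0
      rwa [add_comm] at h
    have hl2 := Real.log_le_log hSh2PD.det_pos hd2
    have hmul := mul_le_mul_of_nonneg_left hl2 hlam0.le
    linarith
  have hfinal := (Monotone.map_csSup_of_continuousAt
    (f := fun z : ℝ => z + c) ((continuous_add_right c).continuousAt)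
    (fun a b h => add_le_add_left h c) hTne hTbdd).symm
  simpa using hfinal
end

section
/- Let r, s ≥ 1, let λ be a real number, and for j = 1, 2 let Σ̃ⱼ be an (r+s)×(r+s) symmetric positive definite matrix partitioned as Σ̃ⱼ = fromBlocks(Aⱼ, Bⱼ; Bⱼᵀ, Cⱼ) with Aⱼ of size r×r and Cⱼ of size s×s. Define the Schur complements Σ̂ⱼ = Aⱼ − Bⱼ Cⱼ⁻¹ Bⱼᵀ (which are positive definite), and let E = fromBlocks(I_r, 0; 0, 0). Then sup over (r+s)×(r+s) symmetric M with 0 ⪯ M ⪯ E of [log det(M + Σ̃₁) − λ log det(M + Σ̃₂)] equals sup over r×r symmetric A with 0 ⪯ A ⪯ I_r of [log det(A + Σ̂₁) − λ log det(A + Σ̂₂)] plus log det C₁ − λ log det C₂. -/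
open Matrix Real RealInnerProductSpace

section helpers
variable {n m : Type*} [Fintype n] [DecidableEq n] [Fintype m] [DecidableEq m]

private lemma psd_diag_nonneg' {M : Matrix n n ℝ} (hM : M.PosSemidef) (j : n) : 0 ≤ M j j := by
  have := hM.dotProduct_mulVec_nonneg (Pi.single j 1)
  simpa [mulVec_single, single_dotProduct] using this

private lemma psd_entry_zero' {M : Matrix n n ℝ} (hM : M.PosSemidef) {j : n} (hj : M j j = 0)
    (i : n) : M i j = 0 := by
  have hsym : M j i = M i j := by
    have := congrFun (congrFun hM.1 i) j
    simpa using this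
  by_contra hij
  set t : ℝ := -(M i i + 1) / (2 * M i j) with ht
  have h := hM.dotProduct_mulVec_nonneg ((Pi.single i 1 : n → ℝ) + t • (Pi.single j 1 : n → ℝ))
  simp only [star_trivial, mulVec_add, mulVec_smul, mulVec_single, dotProduct_add,
    dotProduct_smul, add_dotProduct, smul_dotProduct, single_dotProduct, smul_eq_mul,
    mul_one, one_mul, MulOpposite.op_one, one_smul, col_apply] at h
  rw [hsym, hj, mul_zero, add_zero] at h
  have h2 : M i i + t * M i j + t * M i j = M i i + 2 * t * M i j := by ring
  have h3 : 2 * t * M i j = -(M i i + 1) := by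
    rw [ht]; field_simp
  rw [h2, h3] at h
  linarith

private lemma one_le_det_one_add' {P : Matrix n n ℝ} (hP : P.PosSemidef) : 1 ≤ (1 + P).det := by
  have h' : (1 + P).IsHermitian := isHermitian_one.add hP.1
  have key : ∀ i, 1 ≤ h'.eigenvalues i := by
    intro i
    rw [h'.eigenvalues_eq]
    set v : n → ℝ := ⇑(h'.eigenvectorBasis i) with hv
    have hnorm : ‖h'.eigenvectorBasis i‖ = 1 := h'.eigenvectorBasis.orthonormal.1 i
    have hvv : dotProduct v v = 1 := by
      have h1 : ⟪h'.eigenvectorBasis i, h'.eigenvectorBasis i⟫ = dotProduct (star v) v :=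
        EuclideanSpace.inner_eq_star_dotProduct _ _
      simp only [star_trivial] at h1
      rw [← h1, real_inner_self_eq_norm_sq, hnorm]; norm_num
    have hP2 := hP.dotProduct_mulVec_nonneg v
    simp only [star_trivial, RCLike.re_to_real] at hP2 ⊢
    rw [add_mulVec, one_mulVec, dotProduct_add, hvv]
    linarith
  rw [h'.det_eq_prod_eigenvalues]
  simp only [RCLike.ofReal_real_eq_id, id_eq]
  calc (1:ℝ) = ∏ _i : n, 1 := by simp
  _ ≤ _ := Finset.prod_le_prod (by simp) (by simpa using fun i => key i)

open scoped MatrixOrder in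
private lemma det_le_det_of_le' {M N : Matrix n n ℝ} (hM : M.PosDef) (h : (N - M).PosSemidef) :
    M.det ≤ N.det := by
  set S := CFC.sqrt M with hS
  have hSS : S * S = M := CFC.sqrt_mul_sqrt_self M hM.posSemidef.nonneg
  have hdetS : S.det * S.det = M.det := by rw [← det_mul, hSS]
  have hdet : S.det ≠ 0 := by
    intro h0; rw [h0, mul_zero] at hdetS; exact hM.det_pos.ne (hdetS)
  have hSinv : S * S⁻¹ = 1 := mul_nonsing_inv S hdet.isUnit
  have hSinv' : S⁻¹ * S = 1 := nonsing_inv_mul S hdet.isUnit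
  have hherm : (S⁻¹)ᴴ = S⁻¹ := ((CFC.sqrt_nonneg M).posSemidef.1.inv).eq
  set Q : Matrix n n ℝ := S⁻¹ * (N - M) * S⁻¹ with hQ
  have hQpsd : Q.PosSemidef := by
    have := h.conjTranspose_mul_mul_same (S⁻¹)
    rwa [hherm] at this
  have hN : N = S * (1 + Q) * S := by
    rw [hQ, mul_add, add_mul, mul_one]
    calc N = M + (N - M) := by abel
    _ = S * S + S * (S⁻¹ * (N - M) * S⁻¹) * S := by
        rw [hSS]; congr 1
        rw [← Matrix.mul_assoc, ← Matrix.mul_assoc, hSinv, Matrix.one_mul, Matrix.mul_assoc,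
          hSinv', Matrix.mul_one]
  have h1 : 1 ≤ (1 + Q).det := one_le_det_one_add' hQpsd
  calc M.det = S.det * 1 * S.det := by rw [mul_one, hdetS]
  _ ≤ S.det * (1 + Q).det * S.det := by nlinarith [hdetS, hM.det_pos]
  _ = N.det := by rw [hN, det_mul, det_mul]

private lemma toBlocks22_posDef' {M : Matrix (m ⊕ n) (m ⊕ n) ℝ} (hM : M.PosDef) :
    M.toBlocks₂₂.PosDef := by
  refine PosDef.of_dotProduct_mulVec_pos ?_ ?_
  · ext i j
    have := congrFun (congrFun hM.1 (Sum.inr i)) (Sum.inr j)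
    simpa [toBlocks₂₂] using this
  · intro x hx
    have hz : (Sum.elim 0 x : m ⊕ n → ℝ) ≠ 0 := by
      intro h0
      exact hx (funext fun i => congrFun h0 (Sum.inr i))
    have h := hM.dotProduct_mulVec_pos hz
    rw [← fromBlocks_toBlocks M] at h
    simpa [fromBlocks_mulVec, dotProduct_block, toBlocks₂₂] using h

private lemma toBlocks21_eq' {M : Matrix (m ⊕ n) (m ⊕ n) ℝ} (hM : M.IsHermitian) :
    M.toBlocks₂₁ = (M.toBlocks₁₂)ᵀ := by
  ext i j
  have := congrFun (congrFun hM.eq (Sum.inr i)) (Sum.inl j)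
  simpa [toBlocks₂₁, toBlocks₁₂] using this.symm

private lemma schur_posDef' {M : Matrix (m ⊕ n) (m ⊕ n) ℝ} (hM : M.PosDef) :
    (M.toBlocks₁₁ - M.toBlocks₁₂ * (M.toBlocks₂₂)⁻¹ * (M.toBlocks₁₂)ᵀ).PosDef := by
  set A := M.toBlocks₁₁
  set B := M.toBlocks₁₂
  set D := M.toBlocks₂₂ with hD'
  have hD : D.PosDef := toBlocks22_posDef' hM
  haveI : Invertible D := hD.isUnit.invertible
  have hBt : Bᴴ = Bᵀ := B.conjTranspose_eq_transpose_of_trivial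
  have hM' : M = fromBlocks A B Bᴴ D := by
    rw [hBt, ← toBlocks21_eq' hM.1, fromBlocks_toBlocks]
  refine PosDef.of_dotProduct_mulVec_pos ?_ ?_
  · rw [← hBt]
    exact (IsHermitian.fromBlocks₂₂ A B hD.1).mp (hM' ▸ hM.1)
  · intro x hx
    have hz : (Sum.elim x (-((D⁻¹ * Bᴴ) *ᵥ x)) : m ⊕ n → ℝ) ≠ 0 := by
      intro h0
      exact hx (funext fun i => congrFun h0 (Sum.inl i))
    have h := hM.dotProduct_mulVec_pos hz
    rw [hM'] at h
    simp only [star_trivial] at h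
    have heq := schur_complement_eq₂₂ A B x (-((D⁻¹ * Bᴴ) *ᵥ x)) hD.1
    rw [add_neg_cancel] at heq
    simp only [star_trivial, star_zero, zero_vecMul, zero_dotProduct, zero_add] at heq
    rw [dotProduct_mulVec] at h
    rw [heq] at h
    rwa [← hBt, dotProduct_mulVec]

private lemma det_block' {St : Matrix (m ⊕ n) (m ⊕ n) ℝ} (hSt : St.PosDef)
    (A : Matrix m m ℝ) :
    (fromBlocks A 0 0 0 + St).det =
      (St.toBlocks₂₂).det *
        (A + (St.toBlocks₁₁ - St.toBlocks₁₂ * (St.toBlocks₂₂)⁻¹ * (St.toBlocks₁₂)ᵀ)).det := by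
  have hD : St.toBlocks₂₂.PosDef := toBlocks22_posDef' hSt
  haveI : Invertible St.toBlocks₂₂ := hD.isUnit.invertible
  conv_lhs => rw [← fromBlocks_toBlocks St, fromBlocks_add]
  simp only [add_zero, zero_add]
  rw [det_fromBlocks₂₂]
  rw [toBlocks21_eq' hSt.1, Matrix.invOf_eq_nonsing_inv]
  congr 1
  abel

open scoped MatrixOrder in
private lemma fromBlocks_psd' {A : Matrix m m ℝ} (hA : A.PosSemidef) :
    (fromBlocks A 0 0 (0 : Matrix n n ℝ)).PosSemidef := by
  obtain ⟨B, rfl⟩ := CStarAlgebra.nonneg_iff_eq_star_mul_self.mp hA.nonneg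
  have h : fromBlocks (Bᴴ * B) 0 0 (0 : Matrix n n ℝ) =
      (fromBlocks B 0 0 (0 : Matrix n n ℝ))ᴴ * fromBlocks B 0 0 0 := by
    rw [fromBlocks_conjTranspose, fromBlocks_multiply]
    simp
  rw [star_eq_conjTranspose, h]
  exact posSemidef_conjTranspose_mul_self _

private lemma sSup_add_const' (S : Set ℝ) (hne : S.Nonempty) (hbdd : BddAbove S) (c : ℝ) :
    sSup ((fun z => z + c) '' S) = sSup S + c := by
  obtain ⟨u, hu⟩ := hbdd
  have hbdd' : BddAbove ((fun z => z + c) '' S) := by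
    refine ⟨u + c, ?_⟩
    rintro y ⟨z, hz, rfl⟩
    exact add_le_add_left (hu hz) c
  apply le_antisymm
  · apply csSup_le (hne.image _)
    rintro y ⟨z, hz, rfl⟩
    exact add_le_add_left (le_csSup ⟨u, hu⟩ hz) c
  · have : sSup S ≤ sSup ((fun z => z + c) '' S) - c := by
      apply csSup_le hne
      intro z hz
      have h3 : z + c ≤ sSup ((fun z => z + c) '' S) := le_csSup hbdd' ⟨z, hz, rfl⟩
      linarith
    linarith

end helpers

/-- Core Schur-complement reduction in the proof of Proposition 1. -/
theorem stmt3 (r s : ℕ) (hr : 1 ≤ r) (hs : 1 ≤ s) (lam : ℝ)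
    (St1 St2 : Matrix (Fin r ⊕ Fin s) (Fin r ⊕ Fin s) ℝ)
    (hSt1 : St1.PosDef) (hSt2 : St2.PosDef)
    (Sh1 Sh2 : Matrix (Fin r) (Fin r) ℝ)
    (hSh1 : Sh1 = St1.toBlocks₁₁ - St1.toBlocks₁₂ * (St1.toBlocks₂₂)⁻¹ * (St1.toBlocks₁₂)ᵀ)
    (hSh2 : Sh2 = St2.toBlocks₁₁ - St2.toBlocks₁₂ * (St2.toBlocks₂₂)⁻¹ * (St2.toBlocks₁₂)ᵀ) :
    Sh1.PosDef ∧ Sh2.PosDef ∧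
    sSup {y : ℝ | ∃ M : Matrix (Fin r ⊕ Fin s) (Fin r ⊕ Fin s) ℝ,
        M.PosSemidef ∧
        (Matrix.fromBlocks (1 : Matrix (Fin r) (Fin r) ℝ) 0 0 (0 : Matrix (Fin s) (Fin s) ℝ)
          - M).PosSemidef ∧
        y = Real.log (M + St1).det - lam * Real.log (M + St2).det}
      = sSup {y : ℝ | ∃ A : Matrix (Fin r) (Fin r) ℝ,
          A.PosSemidef ∧ ((1 : Matrix (Fin r) (Fin r) ℝ) - A).PosSemidef ∧
          y = Real.log (A + Sh1).det - lam * Real.log (A + Sh2).det}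
        + (Real.log (St1.toBlocks₂₂).det - lam * Real.log (St2.toBlocks₂₂).det) := by
  have hD1 : St1.toBlocks₂₂.PosDef := toBlocks22_posDef' hSt1
  have hD2 : St2.toBlocks₂₂.PosDef := toBlocks22_posDef' hSt2
  have hSh1d : Sh1.PosDef := hSh1 ▸ schur_posDef' hSt1
  have hSh2d : Sh2.PosDef := hSh2 ▸ schur_posDef' hSt2
  refine ⟨hSh1d, hSh2d, ?_⟩
  set c : ℝ := Real.log (St1.toBlocks₂₂).det - lam * Real.log (St2.toBlocks₂₂).det with hc
  set S2 : Set ℝ := {y : ℝ | ∃ A : Matrix (Fin r) (Fin r) ℝ,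
      A.PosSemidef ∧ ((1 : Matrix (Fin r) (Fin r) ℝ) - A).PosSemidef ∧
      y = Real.log (A + Sh1).det - lam * Real.log (A + Sh2).det} with hS2
  -- value of the objective at block-diagonal M
  have hval : ∀ A : Matrix (Fin r) (Fin r) ℝ, A.PosSemidef →
      Real.log (fromBlocks A 0 0 0 + St1).det - lam * Real.log (fromBlocks A 0 0 0 + St2).det
        = (Real.log (A + Sh1).det - lam * Real.log (A + Sh2).det) + c := by
    intro A hA
    have h1 : (A + Sh1).PosDef := Matrix.PosDef.posSemidef_add hA hSh1d
    have h2 : (A + Sh2).PosDef := Matrix.PosDef.posSemidef_add hA hSh2d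
    rw [det_block' hSt1 A, det_block' hSt2 A, ← hSh1, ← hSh2,
      Real.log_mul hD1.det_pos.ne' h1.det_pos.ne',
      Real.log_mul hD2.det_pos.ne' h2.det_pos.ne', hc]
    ring
  -- the two feasible sets give the same values up to the constant c
  have hset : {y : ℝ | ∃ M : Matrix (Fin r ⊕ Fin s) (Fin r ⊕ Fin s) ℝ,
      M.PosSemidef ∧
      (Matrix.fromBlocks (1 : Matrix (Fin r) (Fin r) ℝ) 0 0 (0 : Matrix (Fin s) (Fin s) ℝ)
        - M).PosSemidef ∧
      y = Real.log (M + St1).det - lam * Real.log (M + St2).det}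
      = (fun z => z + c) '' S2 := by
    ext y
    constructor
    · rintro ⟨M, hMpsd, hEM, rfl⟩
      have hdiag : ∀ j, M (Sum.inr j) (Sum.inr j) = 0 := by
        intro j
        have h1 := psd_diag_nonneg' hMpsd (Sum.inr j)
        have h2 := psd_diag_nonneg' hEM (Sum.inr j)
        simp only [Matrix.sub_apply, fromBlocks_apply₂₂, Matrix.zero_apply, zero_sub] at h2
        linarith
      have hcol : ∀ i j, M i (Sum.inr j) = 0 := fun i j =>
        psd_entry_zero' hMpsd (hdiag j) i
      have hrow : ∀ j i, M (Sum.inr j) i = 0 := by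
        intro j i
        have := congrFun (congrFun hMpsd.1 (Sum.inr j)) i
        simp only [conjTranspose_apply, star_trivial] at this
        rw [← this, hcol]
      set A := M.toBlocks₁₁ with hA
      have h12 : M.toBlocks₁₂ = 0 := by ext i j; exact hcol _ _
      have h21 : M.toBlocks₂₁ = 0 := by ext i j; exact hrow _ _
      have h22 : M.toBlocks₂₂ = 0 := by ext i j; exact hrow _ _
      have hMeq : M = fromBlocks A 0 0 0 := by
        rw [← fromBlocks_toBlocks M, h12, h21, h22]
      have hA1 : A.PosSemidef := hMpsd.submatrix Sum.inl
      have hA2 : ((1 : Matrix (Fin r) (Fin r) ℝ) - A).PosSemidef := by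
        have h := hEM.submatrix Sum.inl
        have heq : (Matrix.fromBlocks (1 : Matrix (Fin r) (Fin r) ℝ) 0 0
            (0 : Matrix (Fin s) (Fin s) ℝ) - M).submatrix Sum.inl Sum.inl
            = (1 : Matrix (Fin r) (Fin r) ℝ) - A := by
          ext i j
          simp [Matrix.sub_apply, fromBlocks_apply₁₁, hA, Matrix.toBlocks₁₁]
        rwa [heq] at h
      refine ⟨Real.log (A + Sh1).det - lam * Real.log (A + Sh2).det,
        ⟨A, hA1, hA2, rfl⟩, ?_⟩
      rw [hMeq]
      exact (hval A hA1).symm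
    · rintro ⟨z, ⟨A, hA1, hA2, rfl⟩, rfl⟩
      have hsub : Matrix.fromBlocks (1 : Matrix (Fin r) (Fin r) ℝ) 0 0
          (0 : Matrix (Fin s) (Fin s) ℝ) - fromBlocks A 0 0 0
          = fromBlocks ((1 : Matrix (Fin r) (Fin r) ℝ) - A) 0 0 0 := by
        ext (i | i) (j | j) <;> simp [Matrix.sub_apply]
      exact ⟨fromBlocks A 0 0 0, fromBlocks_psd' hA1,
        by rw [hsub]; exact fromBlocks_psd' hA2, (hval A hA1).symm⟩
  rw [hset]
  -- nonemptiness and boundedness of the reduced feasible set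
  have hne : S2.Nonempty := by
    refine ⟨Real.log ((0 : Matrix (Fin r) (Fin r) ℝ) + Sh1).det
      - lam * Real.log ((0 : Matrix (Fin r) (Fin r) ℝ) + Sh2).det,
      ⟨0, Matrix.PosSemidef.zero, ?_, rfl⟩⟩
    rw [sub_zero]
    exact Matrix.PosSemidef.one
  have hbdd : BddAbove S2 := by
    refine ⟨Real.log ((1 : Matrix (Fin r) (Fin r) ℝ) + Sh1).det +
      max (-(lam * Real.log Sh2.det)) (-(lam * Real.log ((1 : Matrix (Fin r) (Fin r) ℝ) + Sh2).det)), ?_⟩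
    rintro z ⟨A, hA1, hA2, rfl⟩
    have h1p : (A + Sh1).PosDef := Matrix.PosDef.posSemidef_add hA1 hSh1d
    have h2p : (A + Sh2).PosDef := Matrix.PosDef.posSemidef_add hA1 hSh2d
    have hub1 : (A + Sh1).det ≤ ((1 : Matrix (Fin r) (Fin r) ℝ) + Sh1).det := by
      apply det_le_det_of_le' h1p
      have : (1 : Matrix (Fin r) (Fin r) ℝ) + Sh1 - (A + Sh1)
          = (1 : Matrix (Fin r) (Fin r) ℝ) - A := by abel
      rw [this]; exact hA2
    have hlb2 : Sh2.det ≤ (A + Sh2).det := by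
      apply det_le_det_of_le' hSh2d
      have : A + Sh2 - Sh2 = A := by abel
      rw [this]; exact hA1
    have hub2 : (A + Sh2).det ≤ ((1 : Matrix (Fin r) (Fin r) ℝ) + Sh2).det := by
      apply det_le_det_of_le' h2p
      have : (1 : Matrix (Fin r) (Fin r) ℝ) + Sh2 - (A + Sh2)
          = (1 : Matrix (Fin r) (Fin r) ℝ) - A := by abel
      rw [this]; exact hA2
    have hl1 : Real.log (A + Sh1).det ≤ Real.log ((1 : Matrix (Fin r) (Fin r) ℝ) + Sh1).det :=
      Real.log_le_log h1p.det_pos hub1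
    have hl2a : Real.log Sh2.det ≤ Real.log (A + Sh2).det :=
      Real.log_le_log hSh2d.det_pos hlb2
    have hl2b : Real.log (A + Sh2).det ≤ Real.log ((1 : Matrix (Fin r) (Fin r) ℝ) + Sh2).det :=
      Real.log_le_log h2p.det_pos hub2
    have hmax : -(lam * Real.log (A + Sh2).det) ≤
        max (-(lam * Real.log Sh2.det))
          (-(lam * Real.log ((1 : Matrix (Fin r) (Fin r) ℝ) + Sh2).det)) := by
      rcases le_total 0 lam with hlam | hlam
      · exact le_max_of_le_left (by nlinarith)
      · exact le_max_of_le_right (by nlinarith)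
    have : Real.log (A + Sh1).det - lam * Real.log (A + Sh2).det
        = Real.log (A + Sh1).det + (-(lam * Real.log (A + Sh2).det)) := by ring
    rw [this]
    exact add_le_add hl1 hmax
  rw [sSup_add_const' S2 hne hbdd c]
end

section
/- Let n ≥ 1 and let K_U, Σ₁ be n×n symmetric positive definite matrices. Define B = K_U (K_U + Σ₁)⁻¹ and W₂ = K_U − K_U (K_U + Σ₁)⁻¹ K_U. Then W₂ is symmetric positive definite and (I − B)ᵀ W₂⁻¹ (I − B) = (K_U Σ₁⁻¹ K_U + K_U)⁻¹. -/
open Matrix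

/-- Closed-form simplification of `D_U` (equation (10)): with `B = K_U (K_U + Σ₁)⁻¹` and
`W₂ = K_U − K_U (K_U + Σ₁)⁻¹ K_U`, the matrix `W₂` is positive definite and
`(I − B)ᵀ W₂⁻¹ (I − B) = (K_U Σ₁⁻¹ K_U + K_U)⁻¹`. -/
theorem stmt7 (n : ℕ) (hn : 1 ≤ n)
    (KU S1 : Matrix (Fin n) (Fin n) ℝ) (hKU : KU.PosDef) (hS1 : S1.PosDef)
    (B W2 : Matrix (Fin n) (Fin n) ℝ)
    (hB : B = KU * (KU + S1)⁻¹)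
    (hW2 : W2 = KU - KU * (KU + S1)⁻¹ * KU) :
    W2.PosDef ∧ ((1 - B)ᵀ * W2⁻¹ * (1 - B)) = (KU * S1⁻¹ * KU + KU)⁻¹ := by
  have hS : (KU + S1).PosDef := hKU.add hS1
  have hM : (KU⁻¹ + S1⁻¹).PosDef := hKU.inv.add hS1.inv
  have hKUd : IsUnit KU.det := hKU.det_pos.ne'.isUnit
  have hS1d : IsUnit S1.det := hS1.det_pos.ne'.isUnit
  have hSd : IsUnit (KU + S1).det := hS.det_pos.ne'.isUnit
  have hKi : KU * KU⁻¹ = 1 := mul_nonsing_inv _ hKUd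
  have hKi' : KU⁻¹ * KU = 1 := nonsing_inv_mul _ hKUd
  have hS1i : S1 * S1⁻¹ = 1 := mul_nonsing_inv _ hS1d
  have hS1i' : S1⁻¹ * S1 = 1 := nonsing_inv_mul _ hS1d
  have hSi : (KU + S1) * (KU + S1)⁻¹ = 1 := mul_nonsing_inv _ hSd
  have hSi' : (KU + S1)⁻¹ * (KU + S1) = 1 := nonsing_inv_mul _ hSd
  -- key: W2 is a left inverse of KU⁻¹ + S1⁻¹
  have key : KU * (KU⁻¹ + S1⁻¹) = (KU + S1) * S1⁻¹ := by
    rw [mul_add, add_mul, hKi, hS1i, add_comm]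
  have hW2M : W2 * (KU⁻¹ + S1⁻¹) = 1 := by
    rw [hW2, sub_mul, mul_assoc (KU * (KU + S1)⁻¹) KU _, key, mul_assoc KU _ _,
      ← mul_assoc (KU + S1)⁻¹ _ _, hSi', one_mul, add_mul, hS1i,
      add_sub_cancel_left]
  have hW2eq : (KU⁻¹ + S1⁻¹)⁻¹ = W2 := inv_eq_left_inv hW2M
  have hW2pd : W2.PosDef := hW2eq ▸ hM.inv
  refine ⟨hW2pd, ?_⟩
  have hW2inv : W2⁻¹ = KU⁻¹ + S1⁻¹ := inv_eq_left_inv (mul_eq_one_comm.mp hW2M)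
  -- 1 - B = S1 * (KU + S1)⁻¹
  have h1B : 1 - B = S1 * (KU + S1)⁻¹ := by
    rw [hB, ← hSi, ← sub_mul, add_sub_cancel_left]
  -- transposes
  have hS1t : S1ᵀ = S1 := by simpa using hS1.isHermitian.eq
  have hSt : (KU + S1)ᵀ = KU + S1 := by simpa using hS.isHermitian.eq
  have h1Bt : (1 - B)ᵀ = (KU + S1)⁻¹ * S1 := by
    rw [h1B, transpose_mul, transpose_nonsing_inv, hSt, hS1t]
  -- RHS simplification
  have hRHS : KU * S1⁻¹ * KU + KU = KU * S1⁻¹ * (KU + S1) := by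
    rw [mul_add, mul_assoc KU S1⁻¹ S1, hS1i', mul_one]
  have hmid : S1 * (KU⁻¹ + S1⁻¹) * S1 = S1 * KU⁻¹ * (KU + S1) := by
    rw [mul_add S1 KU⁻¹ S1⁻¹, hS1i, add_mul, one_mul,
      mul_add (S1 * KU⁻¹) KU S1, mul_assoc S1 KU⁻¹ KU, hKi', mul_one, add_comm]
  rw [h1Bt, h1B, hW2inv, hRHS, Matrix.mul_inv_rev, Matrix.mul_inv_rev,
    nonsing_inv_nonsing_inv _ hS1d]
  calc (KU + S1)⁻¹ * S1 * (KU⁻¹ + S1⁻¹) * (S1 * (KU + S1)⁻¹)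
      = (KU + S1)⁻¹ * (S1 * (KU⁻¹ + S1⁻¹) * S1) * (KU + S1)⁻¹ := by
        simp only [Matrix.mul_assoc]
    _ = (KU + S1)⁻¹ * (S1 * KU⁻¹ * (KU + S1)) * (KU + S1)⁻¹ := by rw [hmid]
    _ = (KU + S1)⁻¹ * (S1 * KU⁻¹) * (KU + S1) * (KU + S1)⁻¹ := by
        simp only [Matrix.mul_assoc]
    _ = (KU + S1)⁻¹ * (S1 * KU⁻¹) := mul_nonsing_inv_cancel_right _ _ hSd
end

section
/- Let n ≥ 1, let Σ₂ be an n×n symmetric positive definite matrix, and let K_U be an n×n symmetric matrix with 0 ≺ K_U ≺ I. Set K_V = I − K_U, A = K_V (I + Σ₂)⁻¹, and W₁ = K_V − K_V (I + Σ₂)⁻¹ K_V. Then W₁ is symmetric positive definite and W₁⁻¹ (I − A) − Aᵀ W₁⁻¹ = K_V⁻¹ − (K_U + Σ₂)⁻¹. -/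
open Matrix

/-- Closed-form simplification of `D_V` (equation (11)): with `K_V = I − K_U`,
`A = K_V (I + Σ₂)⁻¹` and `W₁ = K_V − K_V (I + Σ₂)⁻¹ K_V`, the matrix `W₁` is positive
definite and `W₁⁻¹ (I − A) − Aᵀ W₁⁻¹ = K_V⁻¹ − (K_U + Σ₂)⁻¹`. -/
theorem stmt8 (n : ℕ) (hn : 1 ≤ n)
    (S2 KU : Matrix (Fin n) (Fin n) ℝ) (hS2 : S2.PosDef)
    (hKU : KU.PosDef) (hKU' : ((1 : Matrix (Fin n) (Fin n) ℝ) - KU).PosDef)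
    (KV A W1 : Matrix (Fin n) (Fin n) ℝ)
    (hKV : KV = 1 - KU)
    (hA : A = KV * ((1 : Matrix (Fin n) (Fin n) ℝ) + S2)⁻¹)
    (hW1 : W1 = KV - KV * ((1 : Matrix (Fin n) (Fin n) ℝ) + S2)⁻¹ * KV) :
    W1.PosDef ∧ (W1⁻¹ * (1 - A) - Aᵀ * W1⁻¹) = KV⁻¹ - (KU + S2)⁻¹ := by
  set u : Matrix (Fin n) (Fin n) ℝ := ((1 : Matrix (Fin n) (Fin n) ℝ) + S2)⁻¹ with hudef
  set P : Matrix (Fin n) (Fin n) ℝ := (KU + S2)⁻¹ with hPdef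
  have hKVpd : KV.PosDef := hKV ▸ hKU'
  have h1S2 : ((1 : Matrix (Fin n) (Fin n) ℝ) + S2).PosDef :=
    Matrix.PosDef.add Matrix.PosDef.one hS2
  have hupd : u.PosDef := h1S2.inv
  have hQpd : (KU + S2).PosDef := hKU.add hS2
  have hPpd : P.PosDef := hQpd.inv
  -- determinant units
  have hd1 : IsUnit ((1 : Matrix (Fin n) (Fin n) ℝ) + S2).det := h1S2.det_pos.ne'.isUnit
  have hdQ : IsUnit (KU + S2).det := hQpd.det_pos.ne'.isUnit
  have hdKV : IsUnit KV.det := hKVpd.det_pos.ne'.isUnit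
  -- unit identities
  have hu1 : u * (1 + S2) = 1 := Matrix.nonsing_inv_mul _ hd1
  have h1u : (1 + S2) * u = 1 := Matrix.mul_nonsing_inv _ hd1
  have hPQ : P * (KU + S2) = 1 := Matrix.nonsing_inv_mul _ hdQ
  have hQP : (KU + S2) * P = 1 := Matrix.mul_nonsing_inv _ hdQ
  have hKVi : KV * KV⁻¹ = 1 := Matrix.mul_nonsing_inv _ hdKV
  have hiKV : KV⁻¹ * KV = 1 := Matrix.nonsing_inv_mul _ hdKV
  have hsplit : KU + S2 = (1 + S2) - KV := by rw [hKV]; abel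
  -- W1 = KV * u * (KU + S2)
  have hW1eq : W1 = KV * u * (KU + S2) := by
    rw [hsplit, mul_sub, mul_assoc KV u (1 + S2), hu1, mul_one]
    exact hW1
  set M : Matrix (Fin n) (Fin n) ℝ := KV⁻¹ + P with hMdef
  have hWM : W1 * M = 1 := by
    have h₁ : W1 * KV⁻¹ = 1 - KV * u := by
      rw [hW1, sub_mul, hKVi, mul_assoc (KV * u) KV _, hKVi, mul_one]
    have h₂ : W1 * P = KV * u := by
      rw [hW1eq, mul_assoc, hQP, mul_one]
    rw [hMdef, mul_add, h₁, h₂]; abel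
  have hMinv : M⁻¹ = W1 := Matrix.inv_eq_left_inv hWM
  have hMpd : M.PosDef := hKVpd.inv.add hPpd
  have hW1pd : W1.PosDef := hMinv ▸ hMpd.inv
  refine ⟨hW1pd, ?_⟩
  have hW1inv : W1⁻¹ = M := by
    rw [← hMinv, Matrix.nonsing_inv_nonsing_inv _ hMpd.det_pos.ne'.isUnit]
  -- transposes
  have huT : uᵀ = u := by
    have := hupd.isHermitian
    rwa [Matrix.IsHermitian, Matrix.conjTranspose_eq_transpose_of_trivial] at this
  have hKVT : KVᵀ = KV := by
    have := hKVpd.isHermitian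
    rwa [Matrix.IsHermitian, Matrix.conjTranspose_eq_transpose_of_trivial] at this
  have hAT : Aᵀ = u * KV := by rw [hA, Matrix.transpose_mul, huT, hKVT]
  -- key product simplifications
  have hPKVu : P * (KV * u) = P - u := by
    have : KV = (1 + S2) - (KU + S2) := by rw [hsplit]; abel
    rw [this, sub_mul, mul_sub, ← mul_assoc, ← mul_assoc, hPQ, one_mul,
      mul_assoc P, h1u, mul_one]
  have huKVP : u * (KV * P) = P - u := by
    have : KV = (1 + S2) - (KU + S2) := by rw [hsplit]; abel
    rw [this, sub_mul, mul_sub, ← mul_assoc, ← mul_assoc, hu1, one_mul,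
      mul_assoc u, hQP, mul_one]
  rw [hW1inv, hAT, hA, hMdef]
  have e1 : (KV⁻¹ + P) * (1 - KV * u) = KV⁻¹ + P - u - (P - u) := by
    rw [add_mul, mul_sub, mul_sub, mul_one, mul_one, hPKVu, ← mul_assoc, hiKV, one_mul]
    abel
  have e2 : u * KV * (KV⁻¹ + P) = u + (P - u) := by
    rw [mul_assoc, mul_add, mul_add, hKVi, mul_one, huKVP]
  rw [e1, e2]; abel
end

section
/- Let n ≥ 1, λ > 1, let Σ₁, Σ₂ be n×n symmetric positive definite matrices, and let K_U be an n×n symmetric matrix with 0 ≺ K_U ≺ I satisfying the fixed-point equation K_U = ((K_U Σ₁⁻¹ K_U + K_U)⁻¹ + λ (K_U + Σ₂)⁻¹)⁻¹. Define D_U = (K_U Σ₁⁻¹ K_U + K_U)⁻¹, D_V = (I − K_U)⁻¹ − (K_U + Σ₂)⁻¹, and Γ = λ (K_U + Σ₂)⁻¹. Then D_U + Γ is positive definite, D_V + Γ/λ is positive definite, and (D_U + Γ)⁻¹ + (D_V + Γ/λ)⁻¹ = I. -/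
open Matrix

lemma posDef_smul' {n : ℕ} {M : Matrix (Fin n) (Fin n) ℝ} (hM : M.PosDef)
    {c : ℝ} (hc : 0 < c) : (c • M).PosDef := by
  refine ⟨by simpa [Matrix.IsHermitian, Matrix.conjTranspose_smul] using congrArg (c • ·) hM.1.eq, fun x hx => ?_⟩
  convert smul_pos hc (hM.2 hx) using 1
  simp only [smul_eq_mul, Finsupp.mul_sum, Matrix.smul_apply, star_trivial]
  apply Finsupp.sum_congr; intro i _; apply Finsupp.sum_congr; intro j _; ring

/-- Any fixed point of the GBA-P iteration (equation (12)) yields a multiplier `Γ`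
satisfying the three conditions of Theorem 3: `D_U + Γ ≻ 0`, `D_V + Γ/λ ≻ 0` and
`(D_U + Γ)⁻¹ + (D_V + Γ/λ)⁻¹ = I`. -/
theorem stmt9 (n : ℕ) (hn : 1 ≤ n) (lam : ℝ) (hlam : 1 < lam)
    (S1 S2 KU : Matrix (Fin n) (Fin n) ℝ)
    (hS1 : S1.PosDef) (hS2 : S2.PosDef)
    (hKU : KU.PosDef) (hKU' : ((1 : Matrix (Fin n) (Fin n) ℝ) - KU).PosDef)
    (hfix : KU = ((KU * S1⁻¹ * KU + KU)⁻¹ + lam • (KU + S2)⁻¹)⁻¹)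
    (DU DV Γ : Matrix (Fin n) (Fin n) ℝ)
    (hDU : DU = (KU * S1⁻¹ * KU + KU)⁻¹)
    (hDV : DV = ((1 : Matrix (Fin n) (Fin n) ℝ) - KU)⁻¹ - (KU + S2)⁻¹)
    (hΓ : Γ = lam • (KU + S2)⁻¹) :
    (DU + Γ).PosDef ∧ (DV + lam⁻¹ • Γ).PosDef ∧
      (DU + Γ)⁻¹ + (DV + lam⁻¹ • Γ)⁻¹ = 1 := by
  have hlam0 : (0:ℝ) < lam := lt_trans one_pos hlam
  -- A = KU * S1⁻¹ * KU + KU is positive definite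
  have hA : (KU * S1⁻¹ * KU + KU).PosDef := by
    have h1 : (KU * S1⁻¹ * KU).PosSemidef := by
      have := hS1.inv.posSemidef.mul_mul_conjTranspose_same KU
      rwa [hKU.isHermitian.eq] at this
    exact Matrix.PosDef.posSemidef_add h1 hKU
  -- B = KU + S2 is positive definite
  have hB : (KU + S2).PosDef := hKU.add hS2
  have hDUpos : DU.PosDef := hDU ▸ hA.inv
  have hΓpos : Γ.PosDef := hΓ ▸ posDef_smul' hB.inv hlam0
  have hsum : (DU + Γ).PosDef := hDUpos.add hΓpos
  -- DV + lam⁻¹ • Γ = (1 - KU)⁻¹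
  have hkey : DV + lam⁻¹ • Γ = ((1 : Matrix (Fin n) (Fin n) ℝ) - KU)⁻¹ := by
    rw [hDV, hΓ, smul_smul, inv_mul_cancel₀ hlam0.ne', one_smul]
    abel
  have hDVpos : (DV + lam⁻¹ • Γ).PosDef := hkey ▸ hKU'.inv
  refine ⟨hsum, hDVpos, ?_⟩
  have h1 : (DU + Γ)⁻¹ = KU := by
    rw [hDU, hΓ] at *; exact hfix.symm
  have h2 : (DV + lam⁻¹ • Γ)⁻¹ = (1 : Matrix (Fin n) (Fin n) ℝ) - KU := by
    rw [hkey, Matrix.nonsing_inv_nonsing_inv _ (isUnit_iff_isUnit_det _ |>.1 hKU'.isUnit)]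
  rw [h1, h2]; abel
end

section
/- Let n ≥ 1, λ > 1, and let D_U, D_V be n×n real symmetric matrices. Set B = D_U − λ D_V and let B = H diag(b₁, …, bₙ) Hᵀ be a spectral decomposition with H orthogonal. For each i, define a_i = 1/(1+λ) if b_i = 0, and a_i = ((λ+1+b_i) − √((λ+1+b_i)² − 4 b_i)) / (2 b_i) if b_i ≠ 0, and set K* = H diag(a₁, …, aₙ) Hᵀ. Then 0 ≺ K* ≺ I, and for every symmetric matrix K with 0 ≺ K ≺ I, −tr(D_U K) − λ tr(D_V (I − K)) + log det K + λ log det(I − K) ≤ −tr(D_U K*) − λ tr(D_V (I − K*)) + log det K* + λ log det(I − K*). -/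
open Matrix Real

-- scalar facts
lemma scalar_facts (lam : ℝ) (hlam : 1 < lam) (bi ai : ℝ)
    (hai : ai = if bi = 0 then 1 / (1 + lam)
        else ((lam + 1 + bi) - Real.sqrt ((lam + 1 + bi) ^ 2 - 4 * bi)) / (2 * bi)) :
    0 < ai ∧ ai < 1 ∧ ai⁻¹ - lam * (1 - ai)⁻¹ = bi := by
  have hlam0 : (0:ℝ) < lam := by linarith
  have key : 0 < ai ∧ ai < 1 ∧ bi * ai ^ 2 - (lam + 1 + bi) * ai + 1 = 0 := by
    by_cases hb : bi = 0
    · subst hb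
      rw [if_pos rfl] at hai
      refine ⟨by rw [hai]; positivity, ?_, ?_⟩
      · rw [hai]; rw [div_lt_one (by linarith)]; linarith
      · rw [hai]; field_simp; ring
    · rw [if_neg hb] at hai
      set s := lam + 1 + bi with hs
      have hdpos : 0 < s ^ 2 - 4 * bi := by
        have : s ^ 2 - 4 * bi = (lam - 1 + bi) ^ 2 + 4 * lam := by ring
        rw [this]; positivity
      set r := Real.sqrt (s ^ 2 - 4 * bi) with hrdef
      have hr2 : r ^ 2 = s ^ 2 - 4 * bi := Real.sq_sqrt hdpos.le
      have hrpos : 0 < r := Real.sqrt_pos.mpr hdpos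
      have hq : bi * ai ^ 2 - s * ai + 1 = 0 := by
        rw [hai]; field_simp; nlinarith [hr2]
      rcases lt_or_gt_of_ne hb with hbneg | hbpos
      · have h1 : s - r < 0 := by nlinarith
        have h2 : s - 2 * bi > r := by nlinarith
        have ha0 : 0 < ai := by
          rw [hai]; exact div_pos_of_neg_of_neg (by linarith) (by linarith)
        have ha1 : ai < 1 := by
          rw [hai, div_lt_one_of_neg (by linarith)]  -- ??? name
          linarith
        exact ⟨ha0, ha1, hq⟩
      · have hspos : 0 < s := by simp only [hs]; linarith
        have h1 : r < s := by nlinarith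
        have h2 : s - 2 * bi < r := by nlinarith [sq_nonneg (s - 2*bi - r), sq_nonneg (s - 2*bi + r)]
        have ha0 : 0 < ai := by
          rw [hai]; exact div_pos (by linarith) (by linarith)
        have ha1 : ai < 1 := by
          rw [hai, div_lt_one (by linarith)]; linarith
        exact ⟨ha0, ha1, hq⟩
  obtain ⟨h0, h1, hq⟩ := key
  refine ⟨h0, h1, ?_⟩
  have h2 : ai ≠ 0 := ne_of_gt h0
  have h3 : (1 : ℝ) - ai ≠ 0 := by linarith
  field_simp
  linear_combination hq

lemma inj_of_left_inv {n : ℕ} {C D : Matrix (Fin n) (Fin n) ℝ} (h : D * C = 1) :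
    Function.Injective C.mulVec := fun x y hxy => by
  have h2 : D *ᵥ (C *ᵥ x) = D *ᵥ (C *ᵥ y) := by rw [hxy]
  simpa [Matrix.mulVec_mulVec, h] using h2

lemma posdef_conj {n : ℕ} {A : Matrix (Fin n) (Fin n) ℝ} (hA : A.PosDef)
    (B : Matrix (Fin n) (Fin n) ℝ) (hB : Function.Injective B.mulVec) :
    (Bᵀ * A * B).PosDef := by
  refine Matrix.PosDef.of_dotProduct_mulVec_pos ?_ fun x hx => ?_
  · have := Matrix.isHermitian_conjTranspose_mul_mul B hA.1
    simpa [Matrix.conjTranspose_eq_transpose_of_trivial] using this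
  · have hBx : B *ᵥ x ≠ 0 := fun h0 => hx (hB (by simpa using h0))
    have h2 := hA.dotProduct_mulVec_pos hBx
    have h3 : Bᵀ = Bᴴ := (Matrix.conjTranspose_eq_transpose_of_trivial B).symm
    rw [h3]
    simpa only [star_mulVec, dotProduct_mulVec, vecMul_vecMul] using h2

lemma logdet_le_trace {n : ℕ} {M : Matrix (Fin n) (Fin n) ℝ} (hM : M.PosDef) :
    Real.log M.det ≤ M.trace - n := by
  have hev := hM.eigenvalues_pos
  have hdet : M.det = ∏ i, hM.1.eigenvalues i := by simpa using hM.1.det_eq_prod_eigenvalues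
  have htr : M.trace = ∑ i, hM.1.eigenvalues i := by
    conv_lhs => rw [hM.1.spectral_theorem, Unitary.conjStarAlgAut_apply]
    rw [Matrix.trace_mul_comm, ← Matrix.mul_assoc]
    rw [show (star (hM.1.eigenvectorUnitary : Matrix (Fin n) (Fin n) ℝ)) *
        (hM.1.eigenvectorUnitary : Matrix (Fin n) (Fin n) ℝ) = 1 from
      Unitary.coe_star_mul_self _]
    simp [Matrix.trace_diagonal]
  rw [hdet, htr, Real.log_prod (fun i _ => (hev i).ne')]
  have h1 : ∑ i, Real.log (hM.1.eigenvalues i) ≤ ∑ i, (hM.1.eigenvalues i - 1) :=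
    Finset.sum_le_sum fun i _ => Real.log_le_sub_one_of_pos (hev i)
  rw [Finset.sum_sub_distrib] at h1
  simpa using h1

lemma det_conj {n : ℕ} {H : Matrix (Fin n) (Fin n) ℝ} (hH : H * Hᵀ = 1)
    (E : Matrix (Fin n) (Fin n) ℝ) : (H * E * Hᵀ).det = E.det := by
  have h1 : H.det * H.det = 1 := by
    have := congrArg Matrix.det hH
    simpa [Matrix.det_mul, Matrix.det_transpose] using this
  rw [Matrix.det_mul, Matrix.det_mul, Matrix.det_transpose]
  linear_combination E.det * h1

lemma trace_conj {n : ℕ} {H : Matrix (Fin n) (Fin n) ℝ} (hH' : Hᵀ * H = 1)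
    (E : Matrix (Fin n) (Fin n) ℝ) : (H * E * Hᵀ).trace = E.trace := by
  rw [Matrix.trace_mul_comm, ← Matrix.mul_assoc, hH', Matrix.one_mul]

lemma mul_conj_conj {n : ℕ} {H : Matrix (Fin n) (Fin n) ℝ} (hH' : Hᵀ * H = 1)
    (E F : Matrix (Fin n) (Fin n) ℝ) :
    (H * E * Hᵀ) * (H * F * Hᵀ) = H * (E * F) * Hᵀ := by
  calc (H * E * Hᵀ) * (H * F * Hᵀ) = H * E * (Hᵀ * H) * F * Hᵀ := by
        simp only [Matrix.mul_assoc]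
    _ = H * (E * F) * Hᵀ := by rw [hH']; simp only [Matrix.mul_one, Matrix.mul_assoc]

lemma logdet_concave {n : ℕ} {H : Matrix (Fin n) (Fin n) ℝ} (hH : H * Hᵀ = 1) (hH' : Hᵀ * H = 1)
    (e : Fin n → ℝ) (he : ∀ i, 0 < e i) (K : Matrix (Fin n) (Fin n) ℝ) (hK : K.PosDef) :
    Real.log K.det ≤ Real.log (∏ i, e i)
      + ((H * Matrix.diagonal (fun i => (e i)⁻¹) * Hᵀ) * K).trace - n := by
  set u : Fin n → ℝ := fun i => (Real.sqrt (e i))⁻¹ with hu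
  have hu0 : ∀ i, 0 < u i := fun i => inv_pos.mpr (Real.sqrt_pos.mpr (he i))
  have huu : ∀ i, u i * u i = (e i)⁻¹ := fun i => by
    rw [← mul_inv]
    congr 1
    exact Real.mul_self_sqrt (he i).le
  set B := H * Matrix.diagonal u with hB
  have hBinj : Function.Injective B.mulVec := by
    apply inj_of_left_inv (D := Matrix.diagonal (fun i => (u i)⁻¹) * Hᵀ)
    rw [hB, Matrix.mul_assoc, ← Matrix.mul_assoc Hᵀ, hH', Matrix.one_mul,
      Matrix.diagonal_mul_diagonal]
    rw [show (fun i => (u i)⁻¹ * u i) = fun _ => (1:ℝ) from funext fun i =>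
      inv_mul_cancel₀ (hu0 i).ne']
    exact Matrix.diagonal_one
  have hM : (Bᵀ * K * B).PosDef := posdef_conj hK B hBinj
  have h1 := logdet_le_trace hM
  have hprodpos : 0 < ∏ i, e i := Finset.prod_pos fun i _ => he i
  have hdet : (Bᵀ * K * B).det = (∏ i, e i)⁻¹ * K.det := by
    have hHH : H.det * H.det = 1 := by
      have := congrArg Matrix.det hH
      simpa [Matrix.det_mul, Matrix.det_transpose] using this
    have hBdet : B.det = H.det * ∏ i, u i := by
      rw [hB, Matrix.det_mul, Matrix.det_diagonal]
    have h2 : (∏ i, e i)⁻¹ = ∏ i, u i * u i := by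
      rw [← Finset.prod_inv_distrib]
      exact Finset.prod_congr rfl fun i _ => (huu i).symm
    rw [Matrix.det_mul, Matrix.det_mul, Matrix.det_transpose, hBdet, h2,
      Finset.prod_mul_distrib]
    linear_combination (K.det * ((∏ i, u i) * (∏ i, u i))) * hHH
  have htr : (Bᵀ * K * B).trace = ((H * Matrix.diagonal (fun i => (e i)⁻¹) * Hᵀ) * K).trace := by
    rw [Matrix.trace_mul_comm (Bᵀ * K) B, ← Matrix.mul_assoc]
    have hBB : B * Bᵀ = H * Matrix.diagonal (fun i => (e i)⁻¹) * Hᵀ := by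
      rw [hB, Matrix.transpose_mul, Matrix.diagonal_transpose, Matrix.mul_assoc,
        ← Matrix.mul_assoc (Matrix.diagonal u), Matrix.diagonal_mul_diagonal]
      rw [show (fun i => u i * u i) = fun i => (e i)⁻¹ from funext huu]
      simp only [Matrix.mul_assoc]
    rw [hBB]
  have hlogdet : Real.log (Bᵀ * K * B).det = Real.log K.det - Real.log (∏ i, e i) := by
    rw [hdet, Real.log_mul (inv_ne_zero hprodpos.ne') hK.det_pos.ne', Real.log_inv]
    ring
  rw [hlogdet] at h1
  rw [htr] at h1
  linarith

/-- Theorem 5 of the paper: the closed-form maximizer of the GBA-A subproblem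
`max_{0 ≺ K ≺ I} −tr(D_U K) − λ tr(D_V (I − K)) + log det K + λ log det(I − K)`,
obtained via the eigendecomposition of `B = D_U − λ D_V`. -/
theorem stmt10 (n : ℕ) (hn : 1 ≤ n) (lam : ℝ) (hlam : 1 < lam)
    (DU DV : Matrix (Fin n) (Fin n) ℝ) (hDU : DU.IsSymm) (hDV : DV.IsSymm)
    (H : Matrix (Fin n) (Fin n) ℝ) (hH : H * Hᵀ = 1) (hH' : Hᵀ * H = 1)
    (b : Fin n → ℝ) (hB : DU - lam • DV = H * Matrix.diagonal b * Hᵀ)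
    (a : Fin n → ℝ)
    (ha : ∀ i, a i = if b i = 0 then 1 / (1 + lam)
        else ((lam + 1 + b i) - Real.sqrt ((lam + 1 + b i) ^ 2 - 4 * b i)) / (2 * b i))
    (Kstar : Matrix (Fin n) (Fin n) ℝ) (hKstar : Kstar = H * Matrix.diagonal a * Hᵀ) :
    Kstar.PosDef ∧ ((1 : Matrix (Fin n) (Fin n) ℝ) - Kstar).PosDef ∧
    ∀ K : Matrix (Fin n) (Fin n) ℝ, K.PosDef →
      ((1 : Matrix (Fin n) (Fin n) ℝ) - K).PosDef →
      -(DU * K).trace - lam * (DV * (1 - K)).trace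
          + Real.log K.det + lam * Real.log ((1 : Matrix (Fin n) (Fin n) ℝ) - K).det
      ≤ -(DU * Kstar).trace - lam * (DV * (1 - Kstar)).trace
          + Real.log Kstar.det
          + lam * Real.log ((1 : Matrix (Fin n) (Fin n) ℝ) - Kstar).det := by
  have hfacts : ∀ i, 0 < a i ∧ a i < 1 ∧ (a i)⁻¹ - lam * (1 - a i)⁻¹ = b i :=
    fun i => scalar_facts lam hlam (b i) (a i) (ha i)
  have ha0 : ∀ i, 0 < a i := fun i => (hfacts i).1
  have ha1 : ∀ i, 0 < 1 - a i := fun i => by linarith [(hfacts i).2.1]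
  have hfoc : ∀ i, (a i)⁻¹ - lam * (1 - a i)⁻¹ = b i := fun i => (hfacts i).2.2
  have hlam0 : (0:ℝ) < lam := by linarith
  -- injectivity of Hᵀ
  have hHinj : Function.Injective (Hᵀ).mulVec := inj_of_left_inv hH
  -- Kstar posdef
  have hKsd : Kstar.PosDef := by
    have h1 : Kstar = (Hᵀ)ᵀ * Matrix.diagonal a * Hᵀ := by
      rw [hKstar, Matrix.transpose_transpose]
    rw [h1]
    exact posdef_conj (Matrix.PosDef.diagonal ha0) Hᵀ hHinj
  -- 1 - Kstar
  have hIK : (1 : Matrix (Fin n) (Fin n) ℝ) - Kstar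
      = H * Matrix.diagonal (fun i => 1 - a i) * Hᵀ := by
    have h2 : Matrix.diagonal (fun i => 1 - a i)
        = (1 : Matrix (Fin n) (Fin n) ℝ) - Matrix.diagonal a := by
      rw [← Matrix.diagonal_one, ← Matrix.diagonal_sub]
    rw [hKstar, h2, Matrix.mul_sub, Matrix.sub_mul, Matrix.mul_one, hH]
  have hIKsd : ((1 : Matrix (Fin n) (Fin n) ℝ) - Kstar).PosDef := by
    rw [hIK]
    have h1 : H * Matrix.diagonal (fun i => 1 - a i) * Hᵀ
        = (Hᵀ)ᵀ * Matrix.diagonal (fun i => 1 - a i) * Hᵀ := by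
      rw [Matrix.transpose_transpose]
    rw [h1]
    exact posdef_conj (Matrix.PosDef.diagonal ha1) Hᵀ hHinj
  refine ⟨hKsd, hIKsd, fun K hK hIKpd => ?_⟩
  -- determinants of Kstar
  have hdetKs : Kstar.det = ∏ i, a i := by
    rw [hKstar, det_conj hH, Matrix.det_diagonal]
  have hdetIKs : ((1 : Matrix (Fin n) (Fin n) ℝ) - Kstar).det = ∏ i, (1 - a i) := by
    rw [hIK, det_conj hH, Matrix.det_diagonal]
  -- concavity inequalities
  have E1 := logdet_concave hH hH' a ha0 K hK
  have E2 := logdet_concave hH hH' (fun i => 1 - a i) ha1 _ hIKpd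
  -- notation
  set P : Matrix (Fin n) (Fin n) ℝ := H * Matrix.diagonal (fun i => (a i)⁻¹) * Hᵀ with hP
  set Q : Matrix (Fin n) (Fin n) ℝ := H * Matrix.diagonal (fun i => (1 - a i)⁻¹) * Hᵀ with hQ
  -- trace identity: matrix FOC
  have hFOC : H * Matrix.diagonal b * Hᵀ = P - lam • Q := by
    have h1 : Matrix.diagonal b = Matrix.diagonal (fun i => (a i)⁻¹)
        - lam • Matrix.diagonal (fun i => (1 - a i)⁻¹) := by
      ext i j
      rcases eq_or_ne i j with rfl | hij
      · simp [Matrix.diagonal_apply_eq, ← hfoc i]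
      · simp [Matrix.diagonal_apply_ne _ hij, hij]
    rw [h1, Matrix.mul_sub, Matrix.sub_mul, hP, hQ]
    congr 1
    rw [Matrix.mul_smul, Matrix.smul_mul]
  -- trace of B * X in terms of P, Q
  have hBtr : ∀ X : Matrix (Fin n) (Fin n) ℝ,
      ((H * Matrix.diagonal b * Hᵀ) * X).trace = (P * X).trace - lam * (Q * X).trace := by
    intro X
    rw [hFOC, Matrix.sub_mul, Matrix.trace_sub, Matrix.smul_mul, Matrix.trace_smul]
    simp
  -- step A : rewrite DU/DV traces
  have hA : ∀ X : Matrix (Fin n) (Fin n) ℝ,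
      -(DU * X).trace - lam * (DV * (1 - X)).trace
        = -((H * Matrix.diagonal b * Hᵀ) * X).trace - lam * DV.trace := by
    intro X
    rw [← hB]
    have h1 : DV * (1 - X) = DV - DV * X := by rw [Matrix.mul_sub, Matrix.mul_one]
    have h2 : (DU - lam • DV) * X = DU * X - lam • (DV * X) := by
      rw [Matrix.sub_mul, Matrix.smul_mul]
    rw [h1, h2, Matrix.trace_sub, Matrix.trace_sub, Matrix.trace_smul]
    simp only [smul_eq_mul]
    ring
  -- trace values
  have hQtr : Q.trace = ∑ i, (1 - a i)⁻¹ := by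
    rw [hQ, trace_conj hH', Matrix.trace_diagonal]
  have hPKs : (P * Kstar).trace = (n : ℝ) := by
    rw [hP, hKstar, mul_conj_conj hH', Matrix.diagonal_mul_diagonal, trace_conj hH',
      Matrix.trace_diagonal]
    have : ∀ i ∈ Finset.univ, (a i)⁻¹ * a i = (1:ℝ) := fun i _ =>
      inv_mul_cancel₀ (ha0 i).ne'
    rw [Finset.sum_congr rfl this]
    simp
  have hQKs : (Q * Kstar).trace = ∑ i, (1 - a i)⁻¹ * a i := by
    rw [hQ, hKstar, mul_conj_conj hH', Matrix.diagonal_mul_diagonal, trace_conj hH',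
      Matrix.trace_diagonal]
  -- Q * (1 - K) decomposition
  have hQ1K : (Q * (1 - K)).trace = Q.trace - (Q * K).trace := by
    rw [Matrix.mul_sub, Matrix.mul_one, Matrix.trace_sub]
  -- scalar sum identity
  have hsum : lam * (∑ i, (1 - a i)⁻¹) - (1 + lam) * n
      = -(n : ℝ) + lam * ∑ i, (1 - a i)⁻¹ * a i := by
    have h1 : ∀ i ∈ Finset.univ, lam * (1 - a i)⁻¹ - (1 + lam)
        = -1 + lam * ((1 - a i)⁻¹ * a i) := by
      intro i _
      have hne : (1 : ℝ) - a i ≠ 0 := (ha1 i).ne'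
      field_simp
      ring
    have h2 := Finset.sum_congr rfl h1
    simp only [Finset.sum_sub_distrib, Finset.sum_add_distrib, ← Finset.mul_sum,
      Finset.sum_const, Finset.card_univ, Fintype.card_fin, nsmul_eq_mul] at h2
    linarith [h2]
  -- the RHS trace expression
  have hRHS : -(DU * Kstar).trace - lam * (DV * (1 - Kstar)).trace
      = -(n:ℝ) + lam * (∑ i, (1 - a i)⁻¹ * a i) - lam * DV.trace := by
    rw [hA Kstar, hBtr Kstar, hPKs, hQKs]
    ring
  -- the LHS bound
  have hLHS : -(DU * K).trace - lam * (DV * (1 - K)).trace + (P * K).trace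
      + lam * (Q * (1 - K)).trace
      = lam * (∑ i, (1 - a i)⁻¹) - lam * DV.trace := by
    rw [hA K, hBtr K, hQ1K, hQtr]
    ring
  -- combine
  have E2' : lam * Real.log ((1 : Matrix (Fin n) (Fin n) ℝ) - K).det
      ≤ lam * (Real.log (∏ i, (1 - a i)) + (Q * (1 - K)).trace - n) :=
    mul_le_mul_of_nonneg_left E2 hlam0.le
  rw [hdetKs, hdetIKs]
  nlinarith [E1, E2', hsum, hRHS, hLHS]
end

section
/- Let n ≥ 1, λ > 1, and let B be an n×n real symmetric matrix. Then there exists exactly one n×n symmetric matrix K with 0 ≺ K ≺ I satisfying the stationarity equation K⁻¹ = B + λ (I − K)⁻¹. -/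
open Matrix

namespace Stmt11Aux

noncomputable def sfun (lam b : ℝ) : ℝ := Real.sqrt ((b + lam - 1)^2 + 4*lam)

noncomputable def g (lam b : ℝ) : ℝ := 2 / (b + lam + 1 + sfun lam b)

variable {lam b : ℝ}

lemma sfun_sq (hlam : 0 < lam) : (sfun lam b)^2 = (b + lam - 1)^2 + 4*lam :=
  Real.sq_sqrt (by positivity)

lemma sfun_nonneg : 0 ≤ sfun lam b := Real.sqrt_nonneg _

lemma den_gt (hlam : 0 < lam) : 2 < b + lam + 1 + sfun lam b := by
  have h1 := sfun_sq (b := b) hlam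
  have h2 := sfun_nonneg (lam := lam) (b := b)
  nlinarith [sq_nonneg (sfun lam b + (b + lam - 1)), sq_nonneg (sfun lam b - (b + lam - 1))]

lemma g_pos (hlam : 0 < lam) : 0 < g lam b :=
  div_pos two_pos (lt_trans two_pos (den_gt hlam))

lemma g_lt_one (hlam : 0 < lam) : g lam b < 1 :=
  (div_lt_one (lt_trans two_pos (den_gt hlam))).mpr (den_gt hlam)

lemma g_eq (hlam : 0 < lam) : (g lam b)⁻¹ = b + lam * (1 - g lam b)⁻¹ := by
  have hs := sfun_sq (b := b) hlam
  have h2 := den_gt (b := b) hlam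
  have hd0 : b + lam + 1 + sfun lam b ≠ 0 := by linarith
  have hd2 : b + lam + 1 + sfun lam b - 2 ≠ 0 := by linarith
  have h1g : 1 - g lam b = (b + lam + 1 + sfun lam b - 2) / (b + lam + 1 + sfun lam b) := by
    rw [g]; field_simp
  rw [h1g, g, inv_div, inv_div]
  field_simp
  nlinarith [hs]


variable {n : ℕ}

lemma cnj_mul (U : Matrix (Fin n) (Fin n) ℝ) (hU2 : Uᴴ * U = 1) (v w : Fin n → ℝ) :
    (U * diagonal v * Uᴴ) * (U * diagonal w * Uᴴ)
      = U * diagonal (fun i => v i * w i) * Uᴴ := by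
  have h : (U * diagonal v * Uᴴ) * (U * diagonal w * Uᴴ)
      = U * (diagonal v * (Uᴴ * U) * diagonal w) * Uᴴ := by
    simp only [Matrix.mul_assoc]
  rw [h, hU2, Matrix.mul_one, diagonal_mul_diagonal]

lemma cnj_one (U : Matrix (Fin n) (Fin n) ℝ) (hU1 : U * Uᴴ = 1) :
    U * diagonal (fun _ : Fin n => (1:ℝ)) * Uᴴ = 1 := by
  have : diagonal (fun _ : Fin n => (1:ℝ)) = 1 := diagonal_one
  rw [this, Matrix.mul_one, hU1]

lemma cnj_add (U : Matrix (Fin n) (Fin n) ℝ) (v w : Fin n → ℝ) :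
    (U * diagonal v * Uᴴ) + (U * diagonal w * Uᴴ)
      = U * diagonal (fun i => v i + w i) * Uᴴ := by
  have : diagonal v + diagonal w = diagonal (fun i => v i + w i) := (diagonal_add v w)
  rw [← this, Matrix.mul_add, Matrix.add_mul]

lemma cnj_sub (U : Matrix (Fin n) (Fin n) ℝ) (v w : Fin n → ℝ) :
    (U * diagonal v * Uᴴ) - (U * diagonal w * Uᴴ)
      = U * diagonal (fun i => v i - w i) * Uᴴ := by
  have : diagonal v - diagonal w = diagonal (fun i => v i - w i) := diagonal_sub v w
  rw [← this, Matrix.mul_sub, Matrix.sub_mul]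

lemma cnj_smul (U : Matrix (Fin n) (Fin n) ℝ) (c : ℝ) (v : Fin n → ℝ) :
    c • (U * diagonal v * Uᴴ) = U * diagonal (fun i => c * v i) * Uᴴ := by
  have h : (fun i => c * v i) = c • v := rfl
  rw [h, diagonal_smul]
  simp [Matrix.mul_smul, Matrix.smul_mul]

lemma cnj_inv (U : Matrix (Fin n) (Fin n) ℝ) (hU1 : U * Uᴴ = 1) (hU2 : Uᴴ * U = 1)
    (v : Fin n → ℝ) (hv : ∀ i, v i ≠ 0) :
    (U * diagonal v * Uᴴ)⁻¹ = U * diagonal (fun i => (v i)⁻¹) * Uᴴ := by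
  apply Matrix.inv_eq_right_inv
  rw [cnj_mul U hU2]
  have : (fun i => v i * (v i)⁻¹) = fun _ : Fin n => (1:ℝ) := by
    funext i; exact mul_inv_cancel₀ (hv i)
  rw [this, cnj_one U hU1]

lemma cnj_posDef (U : Matrix (Fin n) (Fin n) ℝ) (hU1 : U * Uᴴ = 1)
    (v : Fin n → ℝ) (hv : ∀ i, 0 < v i) :
    (U * diagonal v * Uᴴ).PosDef := by
  refine Matrix.PosDef.of_dotProduct_mulVec_pos ?_ ?_
  · exact isHermitian_mul_mul_conjTranspose U (by
      simp [Matrix.IsHermitian, diagonal_conjTranspose])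
  · intro x hx
    have hy : Uᴴ *ᵥ x ≠ 0 := by
      intro h
      apply hx
      have h2 := congrArg (fun z => U *ᵥ z) h
      simp only [Matrix.mulVec_mulVec, hU1, Matrix.one_mulVec, Matrix.mulVec_zero] at h2
      exact h2
    have key : star x ⬝ᵥ (U * diagonal v * Uᴴ) *ᵥ x
        = star (Uᴴ *ᵥ x) ⬝ᵥ diagonal v *ᵥ (Uᴴ *ᵥ x) := by
      simp only [star_mulVec, conjTranspose_conjTranspose, dotProduct_mulVec,
        vecMul_vecMul, Matrix.mul_assoc]
    rw [key]
    exact (Matrix.PosDef.diagonal hv).dotProduct_mulVec_pos hy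


lemma psd_smul {A : Matrix (Fin n) (Fin n) ℝ} (hA : A.PosSemidef) {c : ℝ} (hc : 0 ≤ c) :
    (c • A).PosSemidef := by
  refine Matrix.PosSemidef.of_dotProduct_mulVec_nonneg ?_ ?_
  · rw [Matrix.IsHermitian, conjTranspose_smul, hA.1.eq]
    simp
  · intro x
    rw [Matrix.smul_mulVec, dotProduct_smul]
    exact mul_nonneg hc (hA.dotProduct_mulVec_nonneg x)

lemma sq_key {a b : Matrix (Fin n) (Fin n) ℝ} (c : ℝ) (hab : a * b = 1) (hba : b * a = 1) :
    (a + c • b) * (a + c • b) = (a - c • b) * (a - c • b) + (4 * c) • 1 := by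
  simp only [Matrix.add_mul, Matrix.mul_add, Matrix.sub_mul, Matrix.mul_sub,
    smul_mul_assoc, mul_smul_comm, smul_smul, hab, hba]
  module

open scoped MatrixOrder in
lemma key (lam : ℝ) (hlam : 0 ≤ lam) (B K : Matrix (Fin n) (Fin n) ℝ)
    (hK : K.PosDef) (hK' : ((1 : Matrix (Fin n) (Fin n) ℝ) - K).PosDef)
    (heq : K⁻¹ = B + lam • ((1 : Matrix (Fin n) (Fin n) ℝ) - K)⁻¹) :
    (K⁻¹ + lam • ((1 : Matrix (Fin n) (Fin n) ℝ) - K)⁻¹ - (lam + 1) • 1).PosSemidef ∧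
      (K⁻¹ + lam • ((1 : Matrix (Fin n) (Fin n) ℝ) - K)⁻¹ - (lam + 1) • 1) ^ 2
        = (B + (lam - 1) • 1) ^ 2 + (4 * lam) • 1 := by
  set P : Matrix (Fin n) (Fin n) ℝ := K⁻¹ with hP
  set Q : Matrix (Fin n) (Fin n) ℝ := ((1 : Matrix (Fin n) (Fin n) ℝ) - K)⁻¹ with hQ
  have hKdet : IsUnit K.det := isUnit_iff_ne_zero.mpr hK.det_pos.ne'
  have hK'det : IsUnit ((1 : Matrix (Fin n) (Fin n) ℝ) - K).det :=
    isUnit_iff_ne_zero.mpr hK'.det_pos.ne'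
  have hKP : K * P = 1 := Matrix.mul_nonsing_inv _ hKdet
  have hPK : P * K = 1 := Matrix.nonsing_inv_mul _ hKdet
  have hKQ : ((1 : Matrix (Fin n) (Fin n) ℝ) - K) * Q = 1 := Matrix.mul_nonsing_inv _ hK'det
  have hQK : Q * ((1 : Matrix (Fin n) (Fin n) ℝ) - K) = 1 := Matrix.nonsing_inv_mul _ hK'det
  -- a = P - 1, b = Q - 1 are mutually inverse
  have hPmul : P * ((1 : Matrix (Fin n) (Fin n) ℝ) - K) = P - 1 := by
    rw [Matrix.mul_sub, Matrix.mul_one, hPK]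
  have hQmul : Q * K = Q - 1 := by
    have h := hQK
    rw [Matrix.mul_sub, Matrix.mul_one] at h
    rw [← h]; abel
  have hab : (P - 1) * (Q - 1) = 1 := by
    rw [← hPmul, ← hQmul, Matrix.mul_assoc, ← Matrix.mul_assoc ((1 : Matrix (Fin n) (Fin n) ℝ) - K),
      hKQ, Matrix.one_mul, hPK]
  have hba : (Q - 1) * (P - 1) = 1 := by
    rw [← hPmul, ← hQmul, Matrix.mul_assoc, ← Matrix.mul_assoc K, hKP, Matrix.one_mul, hQK]
  -- positive semidefiniteness of P - 1 and Q - 1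
  set R : Matrix (Fin n) (Fin n) ℝ := CFC.sqrt K with hRdef
  have hR : R * R = K := CFC.sqrt_mul_sqrt_self K hK.posSemidef.nonneg
  have hRH : Rᴴ = R := (CFC.sqrt_nonneg K).posSemidef.1
  have hKR : K * R = R * K := by rw [← hR, Matrix.mul_assoc]
  have h1 : R * K * R = K * K := by
    rw [Matrix.mul_assoc, hKR, ← Matrix.mul_assoc, hR]
  have h2 : R * ((1 : Matrix (Fin n) (Fin n) ℝ) - K) * R = K - K * K := by
    rw [Matrix.mul_sub, Matrix.mul_one, Matrix.sub_mul, hR, h1]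
  have h3 : (K - K * K).PosSemidef := by
    have := hK'.posSemidef.conjTranspose_mul_mul_same R
    rwa [hRH, h2] at this
  have hPH : Pᴴ = P := hK.isHermitian.inv
  have hQH : Qᴴ = Q := hK'.isHermitian.inv
  have h4 : P * (K - K * K) * P = P - 1 := by
    rw [Matrix.mul_sub, hPK, ← Matrix.mul_assoc, hPK, Matrix.one_mul, Matrix.sub_mul,
      Matrix.one_mul, hKP]
  have h5 : (1 : Matrix (Fin n) (Fin n) ℝ) - K -
      ((1 : Matrix (Fin n) (Fin n) ℝ) - K) * ((1 : Matrix (Fin n) (Fin n) ℝ) - K) = K - K * K := by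
    rw [Matrix.mul_sub, Matrix.mul_one, Matrix.sub_mul, Matrix.one_mul]
    abel
  have h6 : Q * (K - K * K) * Q = Q - 1 := by
    rw [← h5, Matrix.mul_sub, hQK, ← Matrix.mul_assoc, hQK, Matrix.one_mul, Matrix.sub_mul,
      Matrix.one_mul, hKQ]
  have hPSD_P : (P - 1).PosSemidef := by
    have := h3.conjTranspose_mul_mul_same P
    rwa [hPH, h4] at this
  have hPSD_Q : (Q - 1).PosSemidef := by
    have := h3.conjTranspose_mul_mul_same Q
    rwa [hQH, h6] at this
  -- B in terms of P, Q
  have hB : B = P - lam • Q := by rw [heq]; abel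
  have hSa : P + lam • Q - (lam + 1) • 1 = (P - 1) + lam • (Q - 1) := by
    module
  have hXa : B + (lam - 1) • 1 = (P - 1) - lam • (Q - 1) := by
    rw [hB]; module
  constructor
  · rw [hSa]
    exact hPSD_P.add (psd_smul hPSD_Q hlam)
  · rw [hSa, hXa, pow_two, pow_two]
    exact sq_key lam hab hba

end Stmt11Aux

open Stmt11Aux
/-- Uniqueness claim in the proof of Theorem 5: the stationarity equation
`K⁻¹ = B + λ (I − K)⁻¹` has exactly one symmetric solution with `0 ≺ K ≺ I`. -/
theorem stmt11 (n : ℕ) (hn : 1 ≤ n) (lam : ℝ) (hlam : 1 < lam)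
    (B : Matrix (Fin n) (Fin n) ℝ) (hB : B.IsSymm) :
    ∃! K : Matrix (Fin n) (Fin n) ℝ,
      K.PosDef ∧ ((1 : Matrix (Fin n) (Fin n) ℝ) - K).PosDef ∧
        K⁻¹ = B + lam • ((1 : Matrix (Fin n) (Fin n) ℝ) - K)⁻¹ := by
  classical
  have hlam0 : (0:ℝ) < lam := lt_trans one_pos hlam
  have hBH : B.IsHermitian := by
    rw [Matrix.IsHermitian]
    have h : Bᴴ = Bᵀ := by ext i j; simp [Matrix.conjTranspose_apply]
    rw [h]; exact hB
  set U : Matrix (Fin n) (Fin n) ℝ := (hBH.eigenvectorUnitary : Matrix (Fin n) (Fin n) ℝ)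
    with hUdef
  have hU1 : U * Uᴴ = 1 := by
    have h := Matrix.mem_unitaryGroup_iff.mp (hBH.eigenvectorUnitary).2
    rwa [Matrix.star_eq_conjTranspose] at h
  have hU2 : Uᴴ * U = 1 := by
    have h := Matrix.mem_unitaryGroup_iff'.mp (hBH.eigenvectorUnitary).2
    rwa [Matrix.star_eq_conjTranspose] at h
  set μ : Fin n → ℝ := hBH.eigenvalues with hmu
  have hspec : B = U * diagonal μ * Uᴴ := by
    have h := hBH.spectral_theorem
    rwa [Unitary.conjStarAlgAut_apply, Matrix.star_eq_conjTranspose, RCLike.ofReal_real_eq_id, Function.id_comp] at h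
  set gv : Fin n → ℝ := fun i => g lam (μ i) with hgv
  have hg0 : ∀ i, 0 < gv i := fun i => g_pos hlam0
  have hg1 : ∀ i, gv i < 1 := fun i => g_lt_one hlam0
  set K : Matrix (Fin n) (Fin n) ℝ := U * diagonal gv * Uᴴ with hKdef
  have h1K : (1 : Matrix (Fin n) (Fin n) ℝ) - K = U * diagonal (fun i => 1 - gv i) * Uᴴ := by
    rw [← cnj_sub U (fun _ => (1:ℝ)) gv, cnj_one U hU1]
  have hKpos : K.PosDef := cnj_posDef U hU1 gv hg0
  have h1Kpos : ((1 : Matrix (Fin n) (Fin n) ℝ) - K).PosDef := by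
    rw [h1K]
    exact cnj_posDef U hU1 _ (fun i => by have := hg1 i; linarith)
  have hKinv : K⁻¹ = U * diagonal (fun i => (gv i)⁻¹) * Uᴴ :=
    cnj_inv U hU1 hU2 gv (fun i => (hg0 i).ne')
  have h1Kinv : ((1 : Matrix (Fin n) (Fin n) ℝ) - K)⁻¹
      = U * diagonal (fun i => (1 - gv i)⁻¹) * Uᴴ := by
    rw [h1K]
    exact cnj_inv U hU1 hU2 _ (fun i => by have := hg1 i; intro hc; linarith [sub_eq_zero.mp hc])
  have heqK : K⁻¹ = B + lam • ((1 : Matrix (Fin n) (Fin n) ℝ) - K)⁻¹ := by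
    rw [hKinv, h1Kinv, cnj_smul, hspec, cnj_add]
    have h : (fun i => (gv i)⁻¹) = fun i => μ i + lam * (1 - gv i)⁻¹ := by
      funext i
      exact g_eq hlam0
    rw [h]
  refine ⟨K, ⟨hKpos, h1Kpos, heqK⟩, ?_⟩
  rintro K' ⟨h1, h2, h3⟩
  have k1 := key lam hlam0.le B K' h1 h2 h3
  have k2 := key lam hlam0.le B K hKpos h1Kpos heqK
  have hS : K'⁻¹ + lam • ((1 : Matrix (Fin n) (Fin n) ℝ) - K')⁻¹ - (lam + 1) • 1
      = K⁻¹ + lam • ((1 : Matrix (Fin n) (Fin n) ℝ) - K)⁻¹ - (lam + 1) • 1 :=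
    by
      open scoped MatrixOrder in
      rw [← CFC.sqrt_sq _ k1.1.nonneg, ← CFC.sqrt_sq (K⁻¹ + lam • ((1 : Matrix (Fin n) (Fin n) ℝ) - K)⁻¹ - (lam + 1) • 1) k2.1.nonneg, k1.2, k2.2]
  have hq' : lam • ((1 : Matrix (Fin n) (Fin n) ℝ) - K')⁻¹ = K'⁻¹ - B := by rw [h3]; abel
  have hq : lam • ((1 : Matrix (Fin n) (Fin n) ℝ) - K)⁻¹ = K⁻¹ - B := by rw [heqK]; abel
  rw [hq, hq'] at hS
  have hinv : K'⁻¹ = K⁻¹ := by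
    have h2' : (2:ℝ) • K'⁻¹ = (2:ℝ) • K⁻¹ := by
      have := hS
      have e : ∀ M : Matrix (Fin n) (Fin n) ℝ,
          M + (M - B) - (lam + 1) • 1 = (2:ℝ) • M - B - (lam + 1) • 1 := by
        intro M; module
      rw [e K'⁻¹, e K⁻¹] at this
      have := congrArg (fun X => X + B + (lam + 1) • (1 : Matrix (Fin n) (Fin n) ℝ)) this
      simpa [sub_add_cancel] using this
    exact smul_right_injective _ (two_ne_zero) h2'
  have hdet1 : IsUnit K'.det := isUnit_iff_ne_zero.mpr h1.det_pos.ne'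
  have hdet2 : IsUnit K.det := isUnit_iff_ne_zero.mpr hKpos.det_pos.ne'
  have h := congrArg (fun M : Matrix (Fin n) (Fin n) ℝ => M⁻¹) hinv
  simpa [Matrix.nonsing_inv_nonsing_inv _ hdet1, Matrix.nonsing_inv_nonsing_inv _ hdet2] using h
end
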